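/- arXiv:1711.08656 — 7 statements merged into one kernel-verified Lean document; each statement's English description precedes it below -/
import Mathlib

section
/- Let κ > 1 be a cardinal and X a topological space. Then the following are equivalent: (i) X is κ-collectionwise normal; (ii) for every closed subspace A of X and every continuous map f : A → MJ(κ), there exists a continuous map F : X → MJ(κ) with F|_A = f. -/
open Set Topology Cardinal

universe u v

/-- The equivalence relation on `[0,1] × I` identifying all points with first coordinate `0`. -/
def hedgehogSetoid (I : Type u) : Setoid (Set.Icc (0:ℝ) 1 × I) where
  r p q := ((p.1 : ℝ) = 0 ∧ (q.1 : ℝ) = 0) ∨ p = q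
  iseqv := by
    refine ⟨fun p => Or.inr rfl, ?_, ?_⟩
    · rintro p q (⟨h1, h2⟩ | rfl)
      · exact Or.inl ⟨h2, h1⟩
      · exact Or.inr rfl
    · rintro p q r (⟨h1, h2⟩ | rfl) hqr
      · rcases hqr with ⟨h3, h4⟩ | rfl
        · exact Or.inl ⟨h1, h4⟩
        · exact Or.inl ⟨h1, h2⟩
      · exact hqr

/-- The hedgehog with spines indexed by `I`, as a set (quotient of `[0,1] × I`). -/
abbrev Hedgehog (I : Type u) := Quotient (hedgehogSetoid I)

/-- The product topology on `[0,1] × I`, where `[0,1]` carries the usual topology and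
`I` carries the discrete topology. -/
def hedgehogBaseTop (I : Type u) : TopologicalSpace (Set.Icc (0:ℝ) 1 × I) :=
  @instTopologicalSpaceProd _ _ inferInstance ⊥

/-- The quotient topology on the hedgehog: the quotient hedgehog `J(κ)`. -/
def quotHedgehogTop (I : Type u) : TopologicalSpace (Hedgehog I) :=
  TopologicalSpace.coinduced (Quotient.mk (hedgehogSetoid I)) (hedgehogBaseTop I)

/-- The projection `π_κ : J(κ) → [0,1]`, sending `(t, j)` to `t`. -/
def hedgehogPiKappa {I : Type u} : Hedgehog I → Set.Icc (0:ℝ) 1 :=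
  Quotient.lift Prod.fst (by
    rintro p q (⟨h1, h2⟩ | rfl)
    · exact Subtype.ext (h1.trans h2.symm)
    · rfl)

open Classical in
/-- The projection `π_i : J(κ) → [0,1]`, sending `(t, j)` to `t` if `j = i` and to `0`
otherwise. -/
noncomputable def hedgehogProj {I : Type u} (i : I) : Hedgehog I → Set.Icc (0:ℝ) 1 :=
  Quotient.lift (fun p => if p.2 = i then p.1 else ⟨0, by norm_num⟩) (by
    rintro p q (⟨h1, h2⟩ | rfl)
    · have hp : p.1 = (⟨0, by norm_num⟩ : Set.Icc (0:ℝ) 1) := Subtype.ext h1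
      have hq : q.1 = (⟨0, by norm_num⟩ : Set.Icc (0:ℝ) 1) := Subtype.ext h2
      try dsimp only
      split_ifs <;> simp [hp, hq]
    · rfl)

open Classical in
/-- The hedgehog metric: `d((t,i),(s,j)) = |t - s|` if `i = j` and `t + s` otherwise.
(It is defined via representatives; the formula does not depend on the choice of
representatives.) -/
noncomputable def hedgehogDist {I : Type u} (x y : Hedgehog I) : ℝ :=
  if x.out.2 = y.out.2 then |(x.out.1 : ℝ) - (y.out.1 : ℝ)|
  else (x.out.1 : ℝ) + (y.out.1 : ℝ)

/-- The metric hedgehog `MJ(κ)`: the hedgehog equipped with the hedgehog metric. -/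
noncomputable def metricHedgehog (I : Type u) : MetricSpace (Hedgehog I) where
  dist := hedgehogDist
  dist_self := by
    intro x
    show hedgehogDist x x = 0
    unfold hedgehogDist
    rw [if_pos rfl, sub_self, abs_zero]
  dist_comm := by
    intro x y
    show hedgehogDist x y = hedgehogDist y x
    unfold hedgehogDist
    rcases eq_or_ne x.out.2 y.out.2 with h | h
    · rw [if_pos h, if_pos h.symm, abs_sub_comm]
    · rw [if_neg h, if_neg (Ne.symm h), add_comm]
  dist_triangle := by
    intro x y z
    show hedgehogDist x z ≤ hedgehogDist x y + hedgehogDist y z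
    unfold hedgehogDist
    have hx0 : (0:ℝ) ≤ x.out.1 := x.out.1.2.1
    have hy0 : (0:ℝ) ≤ y.out.1 := y.out.1.2.1
    have hz0 : (0:ℝ) ≤ z.out.1 := z.out.1.2.1
    have hxy : |(x.out.1:ℝ) - y.out.1| ≤ (x.out.1:ℝ) + y.out.1 :=
      abs_le.mpr ⟨by linarith, by linarith⟩
    have hyz : |(y.out.1:ℝ) - z.out.1| ≤ (y.out.1:ℝ) + z.out.1 :=
      abs_le.mpr ⟨by linarith, by linarith⟩
    have hxz : |(x.out.1:ℝ) - z.out.1| ≤ (x.out.1:ℝ) + z.out.1 :=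
      abs_le.mpr ⟨by linarith, by linarith⟩
    have htri := abs_sub_le (x.out.1:ℝ) (y.out.1:ℝ) (z.out.1:ℝ)
    have h1 := le_abs_self ((x.out.1:ℝ) - y.out.1)
    have h2 := neg_abs_le ((x.out.1:ℝ) - y.out.1)
    have h3 := le_abs_self ((y.out.1:ℝ) - z.out.1)
    have h4 := neg_abs_le ((y.out.1:ℝ) - z.out.1)
    split_ifs <;> try linarith
    all_goals simp_all
  eq_of_dist_eq_zero := by
    intro x y h
    replace h : hedgehogDist x y = 0 := h
    unfold hedgehogDist at h
    have hx0 : (0:ℝ) ≤ x.out.1 := x.out.1.2.1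
    have hy0 : (0:ℝ) ≤ y.out.1 := y.out.1.2.1
    rw [← Quotient.out_eq x, ← Quotient.out_eq y]
    split_ifs at h with hc
    · have h1 : (x.out.1:ℝ) = y.out.1 := by
        have := abs_eq_zero.mp h
        linarith
      have : x.out = y.out := Prod.ext (Subtype.ext h1) hc
      rw [this]
    · exact Quotient.sound (Or.inl ⟨by linarith, by linarith⟩)

/-- The topology of the metric hedgehog `MJ(κ)`. -/
noncomputable def metricHedgehogTop (I : Type u) : TopologicalSpace (Hedgehog I) :=
  (metricHedgehog I).toUniformSpace.toTopologicalSpace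

/-- The bijection `Φ` from the hedgehog onto the axes `L(κ)` of the cube `[0,1]^I`,
viewed as a map into the cube: `Φ(t,i)(j) = t` if `j = i` and `0` otherwise. -/
noncomputable def hedgehogPhi {I : Type u} : Hedgehog I → (I → Set.Icc (0:ℝ) 1) :=
  fun x j => hedgehogProj j x

/-- The topology of the compact hedgehog `ΛJ(κ)`: the topology transported along `Φ`
from the subspace `L(κ)` of the Tychonoff cube `[0,1]^I`, i.e. the topology induced by `Φ`
from the product topology. -/
noncomputable def compactHedgehogTop (I : Type u) : TopologicalSpace (Hedgehog I) :=
  TopologicalSpace.induced hedgehogPhi inferInstance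

/-- The weight of a topological space: the minimum cardinality of a basis of its topology. -/
noncomputable def weight (X : Type u) [TopologicalSpace X] : Cardinal.{u} :=
  sInf { c : Cardinal.{u} | ∃ B : Set (Set X), TopologicalSpace.IsTopologicalBasis B ∧ #B = c }

/-- A family `A` of subsets of a topological space is discrete if every point has a
neighborhood meeting `A i` for at most one index `i`. -/
def IsDiscreteFamily {X : Type*} [TopologicalSpace X] {ι : Type*} (A : ι → Set X) : Prop :=
  ∀ x : X, ∃ N ∈ nhds x, { i | (A i ∩ N).Nonempty }.Subsingleton

/-- A set-indexed family of subsets of a topological space is discrete if every point has a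
neighborhood meeting at most one member of the family. -/
def IsDiscreteSetFamily {X : Type*} [TopologicalSpace X] (𝒜 : Set (Set X)) : Prop :=
  ∀ x : X, ∃ N ∈ nhds x, { A ∈ 𝒜 | (A ∩ N).Nonempty }.Subsingleton

/-- A topological space `X` is `κ`-collectionwise normal if every discrete family of closed
sets indexed by a set of cardinality `κ` can be separated by a pairwise disjoint family of
open sets. -/
def IsCollectionwiseNormalWrt (κ : Cardinal.{u}) (X : Type v) [TopologicalSpace X] : Prop :=
  ∀ (ι : Type u) (F : ι → Set X), #ι = κ → (∀ i, IsClosed (F i)) → IsDiscreteFamily F →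
    ∃ U : ι → Set X, (∀ i, IsOpen (U i)) ∧ (Pairwise fun i j => Disjoint (U i) (U j)) ∧
      ∀ i, F i ⊆ U i

/-- A topological space is completely metrizable if its topology is induced by some
complete metric. -/
def IsCompletelyMetrizable (X : Type*) [t : TopologicalSpace X] : Prop :=
  ∃ m : MetricSpace X, m.toUniformSpace.toTopologicalSpace = t ∧
    @CompleteSpace X m.toUniformSpace

/-! ### Auxiliary lemmas -/

section AuxLemmas

variable {I : Type u}

open Classical in
lemma hedgehogDist_mk (p q : Set.Icc (0:ℝ) 1 × I) :
    hedgehogDist (Quotient.mk (hedgehogSetoid I) p) (Quotient.mk (hedgehogSetoid I) q) =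
      if p.2 = q.2 then |(p.1 : ℝ) - (q.1 : ℝ)| else (p.1 : ℝ) + (q.1 : ℝ) := by
  have hp := Quotient.mk_out (s := hedgehogSetoid I) p
  have hq := Quotient.mk_out (s := hedgehogSetoid I) q
  have hq0 : (0:ℝ) ≤ (q.1 : ℝ) := q.1.2.1
  have hp0 : (0:ℝ) ≤ (p.1 : ℝ) := p.1.2.1
  unfold hedgehogDist
  rcases hp with ⟨hp1, hp2⟩ | hp' <;> rcases hq with ⟨hq1, hq2⟩ | hq'
  · split_ifs <;> rw [hp1, hq1, hp2, hq2] <;> simp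
  · rw [hq']
    split_ifs <;> rw [hp1] <;> rw [hp2] <;>
      simp [abs_of_nonneg hq0, abs_of_nonpos (by linarith : (0:ℝ) - (q.1:ℝ) ≤ 0)]
  · rw [hp']
    split_ifs <;> rw [hq1] <;> rw [hq2] <;>
      simp [abs_of_nonneg hp0]
  · rw [hp', hq']

lemma hedgehogDist_mk_le (p q : Set.Icc (0:ℝ) 1 × I) :
    hedgehogDist (Quotient.mk (hedgehogSetoid I) p) (Quotient.mk (hedgehogSetoid I) q) ≤
      (p.1 : ℝ) + (q.1 : ℝ) := by
  classical
  rw [hedgehogDist_mk]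
  have hq0 : (0:ℝ) ≤ (q.1 : ℝ) := q.1.2.1
  have hp0 : (0:ℝ) ≤ (p.1 : ℝ) := p.1.2.1
  split_ifs
  · exact abs_le.mpr ⟨by linarith, by linarith⟩
  · exact le_refl _

lemma hedgehogProj_lipschitz (i : I) (x y : Hedgehog I) :
    |(hedgehogProj i x : ℝ) - (hedgehogProj i y : ℝ)| ≤ hedgehogDist x y := by
  classical
  induction x using Quotient.ind with | _ p =>
  induction y using Quotient.ind with | _ q =>
  have hq0 : (0:ℝ) ≤ (q.1 : ℝ) := q.1.2.1
  have hp0 : (0:ℝ) ≤ (p.1 : ℝ) := p.1.2.1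
  have hp1 : (p.1 : ℝ) ≤ 1 := p.1.2.2
  have hq1 : (q.1 : ℝ) ≤ 1 := q.1.2.2
  rw [hedgehogDist_mk]
  have hP : hedgehogProj i (Quotient.mk (hedgehogSetoid I) p) =
      (if p.2 = i then p.1 else ⟨0, by norm_num⟩) := rfl
  have hQ : hedgehogProj i (Quotient.mk (hedgehogSetoid I) q) =
      (if q.2 = i then q.1 else ⟨0, by norm_num⟩) := rfl
  rw [hP, hQ]
  by_cases h1 : p.2 = i <;> by_cases h2 : q.2 = i
  · have h3 : p.2 = q.2 := h1.trans h2.symm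
    rw [if_pos h1, if_pos h2, if_pos h3]
  · have h3 : ¬ p.2 = q.2 := fun h => h2 (h.symm.trans h1)
    rw [if_pos h1, if_neg h2, if_neg h3]
    show |(p.1:ℝ) - (0:ℝ)| ≤ _
    rw [sub_zero, abs_of_nonneg hp0]; linarith
  · have h3 : ¬ p.2 = q.2 := fun h => h1 (h.trans h2)
    rw [if_neg h1, if_pos h2, if_neg h3]
    show |(0:ℝ) - (q.1:ℝ)| ≤ _
    rw [zero_sub, abs_neg, abs_of_nonneg hq0]; linarith
  · rw [if_neg h1, if_neg h2]
    show |(0:ℝ) - (0:ℝ)| ≤ _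
    rw [sub_zero, abs_zero]
    split_ifs
    · exact abs_nonneg _
    · linarith

lemma IsDiscreteFamily.closure_biUnion {Z : Type*} [TopologicalSpace Z] {ι : Type*}
    {A : ι → Set Z} (h : IsDiscreteFamily A) (S : Set ι) :
    closure (⋃ i ∈ S, A i) ⊆ ⋃ i ∈ S, closure (A i) := by
  intro x hx
  obtain ⟨N, hN, hsub⟩ := h x
  obtain ⟨j, hjS, hjne⟩ : ∃ j ∈ S, (A j ∩ N).Nonempty := by
    rcases mem_closure_iff_nhds.mp hx N hN with ⟨y, hyN, hy⟩
    rcases Set.mem_iUnion₂.mp hy with ⟨j, hjS, hyA⟩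
    exact ⟨j, hjS, y, hyA, hyN⟩
  refine Set.mem_iUnion₂.mpr ⟨j, hjS, ?_⟩
  rw [mem_closure_iff_nhds]
  intro M hM
  rcases mem_closure_iff_nhds.mp hx (M ∩ N) (Filter.inter_mem hM hN) with ⟨y, hyMN, hy⟩
  rcases Set.mem_iUnion₂.mp hy with ⟨k, hkS, hyA⟩
  have hkj : k = j := hsub (Set.mem_setOf.mpr ⟨y, hyA, hyMN.2⟩) hjne
  exact ⟨y, hyMN.1, hkj ▸ hyA⟩

lemma IsDiscreteFamily.isClosed_iUnion {Z : Type*} [TopologicalSpace Z] {ι : Type*}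
    {A : ι → Set Z} (h : IsDiscreteFamily A) (hc : ∀ i, IsClosed (A i)) :
    IsClosed (⋃ i, A i) := by
  rw [← closure_eq_iff_isClosed]
  refine subset_antisymm ?_ subset_closure
  calc closure (⋃ i, A i) = closure (⋃ i ∈ Set.univ, A i) := by rw [Set.biUnion_univ]
    _ ⊆ ⋃ i ∈ Set.univ, closure (A i) := h.closure_biUnion Set.univ
    _ = ⋃ i, A i := by rw [Set.biUnion_univ]; exact Set.iUnion_congr fun i => (hc i).closure_eq

lemma NormalSpace.of_cwn {κ : Cardinal.{u}} (hκ : 1 < κ) {Z : Type v} [TopologicalSpace Z]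
    (h : IsCollectionwiseNormalWrt κ Z) : NormalSpace Z := by
  classical
  constructor
  intro s t hs ht hd
  haveI : Nontrivial κ.out := Cardinal.one_lt_iff_nontrivial.mp (by rwa [Cardinal.mk_out])
  obtain ⟨i0, i1, hne⟩ := exists_pair_ne κ.out
  set F : κ.out → Set Z := fun i => if i = i0 then s else if i = i1 then t else ∅ with hF
  have hFc : ∀ i, IsClosed (F i) := by
    intro i
    simp only [hF]
    split_ifs <;> first | exact hs | exact ht | exact isClosed_empty
  have hdisc : IsDiscreteFamily F := by
    intro x
    by_cases hxs : x ∈ s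
    · have hxt : x ∉ t := Set.disjoint_left.mp hd hxs
      refine ⟨tᶜ, ht.isOpen_compl.mem_nhds hxt, ?_⟩
      intro a ha b hb
      have key : ∀ c : κ.out, (F c ∩ tᶜ).Nonempty → c = i0 := by
        intro c hc
        rcases hc with ⟨y, hy1, hy2⟩
        simp only [hF] at hy1
        split_ifs at hy1 with hci0 hci1
        · exact hci0
        · exact absurd hy1 hy2
        · exact hy1.elim
      rw [key a ha, key b hb]
    · refine ⟨sᶜ, hs.isOpen_compl.mem_nhds hxs, ?_⟩
      intro a ha b hb
      have key : ∀ c : κ.out, (F c ∩ sᶜ).Nonempty → c = i1 := by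
        intro c hc
        rcases hc with ⟨y, hy1, hy2⟩
        simp only [hF] at hy1
        split_ifs at hy1 with hci0 hci1
        · exact absurd hy1 hy2
        · exact hci1
        · exact hy1.elim
      rw [key a ha, key b hb]
  obtain ⟨U, hUo, hUd, hUsub⟩ := h κ.out F (Cardinal.mk_out κ) hFc hdisc
  refine ⟨U i0, U i1, hUo i0, hUo i1, ?_, ?_, hUd hne⟩
  · have : F i0 = s := by simp [hF]
    exact this ▸ hUsub i0
  · have : F i1 = t := by simp [hF, hne.symm]
    exact this ▸ hUsub i1

lemma continuousOn_union_of_isClosed {Z Y : Type*} [TopologicalSpace Z] [TopologicalSpace Y]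
    {s t : Set Z} {f : Z → Y} (hs : IsClosed s) (ht : IsClosed t)
    (hfs : ContinuousOn f s) (hft : ContinuousOn f t) : ContinuousOn f (s ∪ t) := by
  intro x hx
  unfold ContinuousWithinAt
  rw [nhdsWithin_union]
  refine Filter.Tendsto.sup ?_ ?_
  · by_cases hxs : x ∈ s
    · exact hfs x hxs
    · have : 𝓝[s] x = ⊥ := by
        rw [← notMem_closure_iff_nhdsWithin_eq_bot, hs.closure_eq]
        exact hxs
      rw [this]; exact Filter.tendsto_bot
  · by_cases hxt : x ∈ t
    · exact hft x hxt
    · have : 𝓝[t] x = ⊥ := by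
        rw [← notMem_closure_iff_nhdsWithin_eq_bot, ht.closure_eq]
        exact hxt
      rw [this]; exact Filter.tendsto_bot

open Classical in
lemma hedgehogProj_mk (i : I) (p : Set.Icc (0:ℝ) 1 × I) :
    hedgehogProj i (Quotient.mk (hedgehogSetoid I) p) =
      (if p.2 = i then p.1 else ⟨0, by norm_num⟩) := rfl

/-- Tietze-type extension of a `[0,1]`-valued function on a closed set `A` that vanishes
outside an open set `Wset`, to a function on `X` vanishing outside `Wset`. -/
lemma extend_vanishing {Z : Type v} [TopologicalSpace Z] [NormalSpace Z] {A : Set Z}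
    (hA : IsClosed A) {Wset : Set Z} (hW : IsOpen Wset) (φ : A → ℝ)
    (hφc : Continuous φ) (hφ0 : ∀ a, 0 ≤ φ a) (hφ1 : ∀ a, φ a ≤ 1)
    (hvan : ∀ a : A, (a : Z) ∉ Wset → φ a = 0) :
    ∃ h : Z → ℝ, Continuous h ∧ (∀ x, 0 ≤ h x) ∧ (∀ x, h x ≤ 1) ∧
      (∀ a : A, h a = φ a) ∧ (∀ x ∉ Wset, h x = 0) := by
  classical
  set K : Set Z := A ∪ Wsetᶜ with hK
  have hKc : IsClosed K := hA.union hW.isClosed_compl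
  set q : Z → ℝ := fun x => if hx : x ∈ A then φ ⟨x, hx⟩ else 0 with hq
  have hqA : ∀ a : A, q a = φ a := by
    intro a
    simp only [hq]
    rw [dif_pos a.2]
  have hqW : ∀ x ∈ Wsetᶜ, q x = 0 := by
    intro x hx
    simp only [hq]
    split_ifs with h
    · exact hvan ⟨x, h⟩ hx
    · rfl
  have hcontA : ContinuousOn q A := by
    rw [continuousOn_iff_continuous_restrict]
    have hrq : A.restrict q = φ := funext fun a => hqA a
    have := hφc; rw [← hrq] at this; exact this
  have hcontW : ContinuousOn q Wsetᶜ :=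
    ContinuousOn.congr (continuousOn_const (c := (0:ℝ))) hqW
  have hcontK : ContinuousOn q K :=
    continuousOn_union_of_isClosed hA hW.isClosed_compl hcontA hcontW
  obtain ⟨g1, hg1⟩ := ContinuousMap.exists_restrict_eq (Y := ℝ) hKc
    ⟨K.restrict q, continuousOn_iff_continuous_restrict.mp hcontK⟩
  have hg1K : ∀ (x : Z) (hx : x ∈ K), g1 x = q x := by
    intro x hx
    exact congrFun (congrArg DFunLike.coe hg1) ⟨x, hx⟩
  refine ⟨fun x => max 0 (min (g1 x) 1),
    Continuous.max continuous_const ((map_continuous g1).min continuous_const),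
    fun x => le_max_left _ _, fun x => max_le (by norm_num) (min_le_right _ _), ?_, ?_⟩
  · intro a
    have hq' : g1 a = q a := hg1K _ (Or.inl a.2)
    show max 0 (min (g1 a) 1) = φ a
    rw [hq', hqA a, min_eq_left (hφ1 a), max_eq_right (hφ0 a)]
  · intro x hx
    have hq' : g1 x = q x := hg1K _ (Or.inr hx)
    show max 0 (min (g1 x) 1) = 0
    rw [hq', hqW x hx]
    norm_num

end AuxLemmas

/-- A space `X` is `κ`-collectionwise normal (for `κ > 1`) if and only if every continuous
map from a closed subspace of `X` to the metric hedgehog `MJ(κ)` extends continuously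
to `X`. -/
theorem collectionwiseNormal_iff_hedgehog_extension (κ : Cardinal.{u}) (hκ : 1 < κ)
    (I : Type u) (hI : #I = κ) (X : Type v) [TopologicalSpace X] :
    IsCollectionwiseNormalWrt κ X ↔
      ∀ (A : Set X), IsClosed A →
        ∀ f : A → Hedgehog I, @Continuous _ _ _ (metricHedgehogTop I) f →
          ∃ F : X → Hedgehog I, @Continuous _ _ _ (metricHedgehogTop I) F ∧
            ∀ a : A, F a = f a := by
  classical
  letI : MetricSpace (Hedgehog I) := metricHedgehog I
  haveI hInt : Nontrivial I := Cardinal.one_lt_iff_nontrivial.mp (hI ▸ hκ)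
  constructor
  · intro hcwn A hA f hf
    haveI hnorm : NormalSpace X := NormalSpace.of_cwn hκ hcwn
    have hf' : Continuous f := hf
    obtain ⟨i₀⟩ : Nonempty I := inferInstance
    -- coordinate functions
    set fc : I → A → ℝ := fun i a => (hedgehogProj i (f a) : ℝ) with hfcdef
    have hproj_cont : ∀ i : I, Continuous fun x : Hedgehog I => (hedgehogProj i x : ℝ) := by
      intro i
      apply LipschitzWith.continuous (K := 1)
      apply LipschitzWith.of_dist_le_mul
      intro x y
      simp only [NNReal.coe_one, one_mul]
      calc dist ((hedgehogProj i x : ℝ)) ((hedgehogProj i y : ℝ))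
          = |(hedgehogProj i x : ℝ) - (hedgehogProj i y : ℝ)| := Real.dist_eq _ _
        _ ≤ hedgehogDist x y := hedgehogProj_lipschitz i x y
        _ = dist x y := rfl
    have hfc_cont : ∀ i, Continuous (fc i) := fun i => (hproj_cont i).comp hf'
    have hfc_mem : ∀ (i : I) (a : A), fc i a ∈ Set.Icc (0:ℝ) 1 :=
      fun i a => (hedgehogProj i (f a)).2
    have hfc_eq : ∀ (i : I) (a : A),
        fc i a = if (f a).out.2 = i then ((f a).out.1 : ℝ) else 0 := by
      intro i a
      have hout : f a = Quotient.mk (hedgehogSetoid I) (f a).out := (Quotient.out_eq _).symm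
      show (hedgehogProj i (f a) : ℝ) = _
      conv_lhs => rw [hout]
      rw [hedgehogProj_mk]
      split_ifs <;> rfl
    have hsp : ∀ a : A, {i : I | 0 < fc i a}.Subsingleton := by
      intro a i hi j hj
      rw [Set.mem_setOf_eq, hfc_eq] at hi hj
      split_ifs at hi with h1
      · split_ifs at hj with h2
        · exact h1.symm.trans h2
        · exact absurd hj (lt_irrefl 0)
      · exact absurd hi (lt_irrefl 0)
    -- the radius function
    set rho : A → ℝ := fun a => ((f a).out.1 : ℝ) with hrhodef
    have hzero_coe : ((⟨0, by norm_num⟩ : Set.Icc (0:ℝ) 1) : ℝ) = 0 := rfl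
    have hrho_eq_dist : ∀ a, rho a =
        dist (f a) (Quotient.mk (hedgehogSetoid I) (⟨0, by norm_num⟩, i₀)) := by
      intro a
      show ((f a).out.1 : ℝ) = hedgehogDist _ _
      conv_rhs => rw [← Quotient.out_eq (f a)]
      rw [hedgehogDist_mk, hzero_coe]
      split_ifs
      · rw [sub_zero, abs_of_nonneg (f a).out.1.2.1]
      · rw [add_zero]
    have hrho_cont : Continuous rho := by
      have : rho = fun a =>
          dist (f a) (Quotient.mk (hedgehogSetoid I) (⟨0, by norm_num⟩, i₀)) :=
        funext hrho_eq_dist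
      rw [this]
      exact hf'.dist continuous_const
    have hrho_nonneg : ∀ a, 0 ≤ rho a := fun a => (f a).out.1.2.1
    have hrho_le_one : ∀ a, rho a ≤ 1 := fun a => (f a).out.1.2.2
    have hfc_le_rho : ∀ (i : I) (a : A), fc i a ≤ rho a := by
      intro i a
      rw [hfc_eq]
      split_ifs
      · exact le_refl _
      · exact hrho_nonneg a
    have hrho_eq_zero : ∀ a : A, (∀ i, fc i a = 0) → rho a = 0 := by
      intro a h
      have h2 := h (f a).out.2
      rw [hfc_eq, if_pos rfl] at h2
      exact h2
    -- scales
    set c : ℕ → ℝ := fun n => (1/2 : ℝ)^n with hcdef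
    have hc_pos : ∀ n, 0 < c n := fun n => pow_pos (by norm_num) n
    have hc_succ : ∀ n, c (n+1) < c n := by
      intro n
      show (1/2:ℝ)^(n+1) < (1/2:ℝ)^n
      rw [pow_succ]
      nlinarith [pow_pos (show (0:ℝ) < 1/2 by norm_num) n]
    have hc_arch : ∀ t : ℝ, 0 < t → ∃ n, c n ≤ t := by
      intro t ht
      obtain ⟨n, hn⟩ := exists_pow_lt_of_lt_one ht (by norm_num : (1/2:ℝ) < 1)
      exact ⟨n, le_of_lt hn⟩
    -- the closed discrete families
    set Cst : I → ℕ → Set X := fun i n => Subtype.val '' {a : A | c n ≤ fc i a} with hCstdef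
    have hCst_closed : ∀ i n, IsClosed (Cst i n) := by
      intro i n
      exact hA.isClosedEmbedding_subtypeVal.isClosedMap _
        (isClosed_le continuous_const (hfc_cont i))
    have hCst_subA : ∀ i n, Cst i n ⊆ A := by
      rintro i n x ⟨a, _, rfl⟩
      exact a.2
    have hCst_mem : ∀ (i n) (a : A), (a : X) ∈ Cst i n ↔ c n ≤ fc i a := by
      intro i n a
      constructor
      · rintro ⟨b, hb, hba⟩
        have hba' : b = a := Subtype.ext hba
        exact hba' ▸ hb
      · intro h
        exact ⟨a, h, rfl⟩
    have hCst_disc : ∀ n, IsDiscreteFamily (fun i => Cst i n) := by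
      intro n x
      by_cases hx : x ∈ A
      · have hball : {y : A | dist (f y) (f (⟨x, hx⟩ : A)) < c (n+1)} ∈ 𝓝 (⟨x, hx⟩ : A) :=
          hf'.continuousAt (Metric.ball_mem_nhds _ (hc_pos (n+1)))
        rw [nhds_subtype] at hball
        obtain ⟨N, hN, hNsub⟩ := Filter.mem_comap.mp hball
        refine ⟨N, hN, ?_⟩
        have key : ∀ i : I, (Cst i n ∩ N).Nonempty → 0 < fc i ⟨x, hx⟩ := by
          rintro i ⟨y, hy1, hy2⟩
          obtain ⟨b, hb, hby⟩ := hy1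
          have hbN : b ∈ Subtype.val ⁻¹' N := by
            rw [Set.mem_preimage, hby]
            exact hy2
          have hdist : dist (f b) (f (⟨x, hx⟩ : A)) < c (n+1) := hNsub hbN
          have hlip : |fc i b - fc i ⟨x, hx⟩| ≤ dist (f b) (f (⟨x, hx⟩ : A)) :=
            hedgehogProj_lipschitz i (f b) (f ⟨x, hx⟩)
          have habs := (abs_lt.mp (lt_of_le_of_lt hlip hdist)).2
          have hbmem : c n ≤ fc i b := hb
          linarith [hc_succ n]
        intro i hi j hj
        exact hsp ⟨x, hx⟩ (key i hi) (key j hj)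
      · refine ⟨Aᶜ, hA.isOpen_compl.mem_nhds hx, ?_⟩
        rintro i ⟨y, hy1, hy2⟩
        exact absurd (hCst_subA i n hy1) hy2
    -- collectionwise normality: disjoint open sets at each scale
    have hstep : ∀ n : ℕ, ∃ U : I → Set X, (∀ i, IsOpen (U i)) ∧
        (Pairwise fun i j => Disjoint (U i) (U j)) ∧ ∀ i, Cst i n ⊆ U i :=
      fun n => hcwn I (fun i => Cst i n) hI (fun i => hCst_closed i n) (hCst_disc n)
    choose Y hYopen hYdisj hYsub using hstep
    -- shrink to get a *discrete* family of open sets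
    have hCun_closed : ∀ n, IsClosed (⋃ i, Cst i n) :=
      fun n => (hCst_disc n).isClosed_iUnion (fun i => hCst_closed i n)
    have hOex : ∀ n, ∃ O : Set X, IsOpen O ∧ (⋃ i, Cst i n) ⊆ O ∧
        closure O ⊆ ⋃ i, Y n i :=
      fun n => normal_exists_closure_subset (hCun_closed n) (isOpen_iUnion (hYopen n))
        (Set.iUnion_mono fun i => hYsub n i)
    choose O hOopen hOsub hOcl using hOex
    -- shrink further to keep closures away from small values of `fc i`
    have hEclosed : ∀ (i : I) (n : ℕ), IsClosed (Subtype.val '' {a : A | fc i a ≤ c (n+1)}) :=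
      fun i n => hA.isClosedEmbedding_subtypeVal.isClosedMap _
        (isClosed_le (hfc_cont i) continuous_const)
    have hGex : ∀ (i : I) (n : ℕ), ∃ G : Set X, IsOpen G ∧ Cst i n ⊆ G ∧
        closure G ⊆ (Subtype.val '' {a : A | fc i a ≤ c (n+1)})ᶜ := by
      intro i n
      apply normal_exists_closure_subset (hCst_closed i n) (hEclosed i n).isOpen_compl
      rintro x hx ⟨b, hb, hbx⟩
      obtain ⟨b', hb', hb'x⟩ := hx
      have hbb : b = b' := Subtype.ext (hbx.trans hb'x.symm)
      rw [hbb] at hb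
      have := lt_of_lt_of_le (hc_succ n) hb'
      exact absurd hb (not_le.mpr this)
    choose Gs hGopen hGsub hGcl using hGex
    -- the combined discrete open families
    set U : I → ℕ → Set X := fun i n => Y n i ∩ O n ∩ Gs i n with hUdef
    have hUopen : ∀ i n, IsOpen (U i n) :=
      fun i n => (((hYopen n i).inter (hOopen n)).inter (hGopen i n))
    have hUsub : ∀ i n, Cst i n ⊆ U i n := by
      intro i n x hx
      exact ⟨⟨hYsub n i hx, hOsub n (Set.mem_iUnion.mpr ⟨i, hx⟩)⟩, hGsub i n hx⟩
    have hUdisc : ∀ n, IsDiscreteFamily (fun i => U i n) := by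
      intro n x
      by_cases hx : x ∈ closure (O n)
      · obtain ⟨j, hj⟩ := Set.mem_iUnion.mp (hOcl n hx)
        refine ⟨Y n j, (hYopen n j).mem_nhds hj, ?_⟩
        have key : ∀ l, (U l n ∩ Y n j).Nonempty → l = j := by
          rintro l ⟨y, hy1, hy2⟩
          by_contra hlj
          exact Set.disjoint_left.mp (hYdisj n hlj) hy1.1.1 hy2
        intro i hi k hk
        rw [key i hi, key k hk]
      · refine ⟨(closure (O n))ᶜ, isClosed_closure.isOpen_compl.mem_nhds hx, ?_⟩
        rintro i ⟨y, hy1, hy2⟩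
        exact absurd (subset_closure hy1.1.2) hy2
    have hUclA : ∀ (i : I) (n : ℕ) (x : X), x ∈ closure (U i n) → ∀ hxA : x ∈ A,
        c (n+1) < fc i ⟨x, hxA⟩ := by
      intro i n x hx hxA
      have hsubG : U i n ⊆ Gs i n := fun y hy => hy.2
      have hclG : x ∈ closure (Gs i n) := closure_mono hsubG hx
      have hcompl := hGcl i n hclG
      by_contra hle
      push_neg at hle
      exact hcompl ⟨⟨x, hxA⟩, hle, rfl⟩
    -- the separating open sets
    set T : I → ℕ → Set X :=
      fun i n => ⋃ m ∈ Finset.range (n+1), closure (⋃ j ∈ ({i}ᶜ : Set I), U j m) with hTdef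
    have hTclosed : ∀ i n, IsClosed (T i n) :=
      fun i n => Set.Finite.isClosed_biUnion (Finset.range (n+1)).finite_toSet
        (fun m _ => isClosed_closure)
    set W : I → Set X := fun i => ⋃ n, (U i n \ T i n) with hWdef
    have hWopen : ∀ i, IsOpen (W i) :=
      fun i => isOpen_iUnion fun n => (hUopen i n).sdiff (hTclosed i n)
    have hWdisj : Pairwise fun i j => Disjoint (W i) (W j) := by
      intro i j hij
      rw [Set.disjoint_left]
      intro x hxi hxj
      obtain ⟨n, hn⟩ := Set.mem_iUnion.mp hxi
      obtain ⟨n', hn'⟩ := Set.mem_iUnion.mp hxj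
      rcases le_total n n' with h | h
      · apply hn'.2
        refine Set.mem_biUnion (Finset.mem_range.mpr (Nat.lt_succ_of_le h)) ?_
        exact subset_closure (Set.mem_biUnion (show i ∈ ({j}ᶜ : Set I) from hij) hn.1)
      · apply hn.2
        refine Set.mem_biUnion (Finset.mem_range.mpr (Nat.lt_succ_of_le h)) ?_
        exact subset_closure
          (Set.mem_biUnion (show j ∈ ({i}ᶜ : Set I) from fun hh => hij (Set.mem_singleton_iff.mp hh).symm) hn'.1)
    have hWget : ∀ (a : A) (i : I), 0 < fc i a → (a : X) ∈ W i := by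
      intro a i hpos
      obtain ⟨n, hn⟩ := hc_arch _ hpos
      have haU : (a : X) ∈ U i n := hUsub i n ((hCst_mem i n a).mpr hn)
      refine Set.mem_iUnion.mpr ⟨n, haU, ?_⟩
      intro hT
      obtain ⟨m, _, hcl⟩ := Set.mem_iUnion₂.mp hT
      have hucl := (hUdisc m).closure_biUnion ({i}ᶜ : Set I) hcl
      obtain ⟨j, hji, hj⟩ := Set.mem_iUnion₂.mp hucl
      have hfj : c (m+1) < fc j a := by
        have h1 := hUclA j m _ hj a.2
        have h2 : (⟨(a : X), a.2⟩ : A) = a := rfl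
        rwa [h2] at h1
      have hji' : j = i := hsp a (lt_trans (hc_pos (m+1)) hfj) hpos
      exact hji hji'
    have hWzero : ∀ (a : A) (i : I), (a : X) ∉ W i → fc i a = 0 := by
      intro a i h
      by_contra hne
      exact h (hWget a i (lt_of_le_of_ne (hfc_mem i a).1 (Ne.symm hne)))
    -- extend the coordinate functions
    have hhex : ∀ i : I, ∃ h : X → ℝ, Continuous h ∧ (∀ x, 0 ≤ h x) ∧ (∀ x, h x ≤ 1) ∧
        (∀ a : A, h a = fc i a) ∧ (∀ x ∉ W i, h x = 0) :=
      fun i => extend_vanishing hA (hWopen i) (fc i) (hfc_cont i)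
        (fun a => (hfc_mem i a).1) (fun a => (hfc_mem i a).2) (fun a ha => hWzero a i ha)
    choose hh hhcont hh0 hh1 hhA hhvan using hhex
    -- extend the radius function
    obtain ⟨g, hgcont, hg0, hg1, hgA, hgvan⟩ :=
      extend_vanishing hA (isOpen_iUnion hWopen) rho hrho_cont hrho_nonneg hrho_le_one
        (fun a ha => hrho_eq_zero a
          (fun i => hWzero a i (fun hw => ha (Set.mem_iUnion.mpr ⟨i, hw⟩))))
    set hm : I → X → ℝ := fun i x => min (hh i x) (g x) with hhmdef
    have hm0 : ∀ i x, 0 ≤ hm i x := fun i x => le_min (hh0 i x) (hg0 x)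
    have hm1 : ∀ i x, hm i x ≤ 1 := fun i x => (min_le_left _ _).trans (hh1 i x)
    have hmA : ∀ (i : I) (a : A), hm i a = fc i a := by
      intro i a
      show min (hh i a) (g a) = fc i a
      rw [hhA i a, hgA a]
      exact min_eq_left (hfc_le_rho i a)
    have hmvan : ∀ (i : I) (x : X), x ∉ W i → hm i x = 0 := by
      intro i x hx
      show min (hh i x) (g x) = 0
      rw [hhvan i x hx]
      exact min_eq_left (hg0 x)
    have hmg : ∀ i x, hm i x ≤ g x := fun i x => min_le_right _ _
    have hmcont : ∀ i, Continuous (hm i) := fun i => (hhcont i).min hgcont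
    -- the index function
    set idx : X → I := fun x => if h : ∃ i, x ∈ W i then h.choose else i₀ with hidxdef
    have hidx : ∀ x i, x ∈ W i → idx x = i := by
      intro x i hx
      have hex : ∃ j, x ∈ W j := ⟨i, hx⟩
      simp only [hidxdef]
      rw [dif_pos hex]
      have hch := hex.choose_spec
      by_contra hne
      exact Set.disjoint_left.mp (hWdisj hne) hch hx
    -- the extension
    set s : X → ℝ := fun x => hm (idx x) x with hsdef
    have hs0 : ∀ x, 0 ≤ s x := fun x => hm0 _ x
    have hs1 : ∀ x, s x ≤ 1 := fun x => hm1 _ x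
    have hsW : ∀ x i, x ∈ W i → s x = hm i x := by
      intro x i hx
      simp only [hsdef, hidx x i hx]
    have hsg : ∀ x, s x ≤ g x := fun x => hmg _ x
    have hsvan : ∀ x, (∀ i, x ∉ W i) → s x = 0 := by
      intro x h
      simp only [hsdef]
      exact hmvan _ x (h _)
    set F : X → Hedgehog I :=
      fun x => Quotient.mk (hedgehogSetoid I) (⟨s x, hs0 x, hs1 x⟩, idx x) with hFdef
    have hFrestrict : ∀ a : A, F a = f a := by
      intro a
      by_cases hpos : ∃ i, 0 < fc i a
      · obtain ⟨i, hi⟩ := hpos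
        have haW : (a : X) ∈ W i := hWget a i hi
        have h1 : s a = fc i a := by
          rw [hsW _ i haW, hmA i a]
        have h2 : idx (a : X) = i := hidx _ i haW
        have hout2 : (f a).out.2 = i := by
          by_contra hne
          rw [hfc_eq i a, if_neg hne] at hi
          exact lt_irrefl 0 hi
        have hout1 : ((f a).out.1 : ℝ) = fc i a := by
          rw [hfc_eq i a, if_pos hout2]
        show Quotient.mk (hedgehogSetoid I) (⟨s a, hs0 a, hs1 a⟩, idx (a : X)) = f a
        conv_rhs => rw [← Quotient.out_eq (f a)]
        congr 1
        refine Prod.ext (Subtype.ext ?_) ?_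
        · show s a = ((f a).out.1 : ℝ)
          rw [h1, hout1]
        · show idx (a : X) = (f a).out.2
          rw [h2, hout2]
      · push_neg at hpos
        have hz : ∀ i, fc i a = 0 := fun i => le_antisymm (hpos i) (hfc_mem i a).1
        have hrho0 : rho a = 0 := hrho_eq_zero a hz
        have hs_a : s (a : X) = 0 := by
          refine le_antisymm ?_ (hs0 _)
          calc s (a : X) ≤ g (a : X) := hsg _
            _ = rho a := hgA a
            _ = 0 := hrho0
        have hout1 : ((f a).out.1 : ℝ) = 0 := by
          have h2 := hfc_eq (f a).out.2 a
          rw [if_pos rfl] at h2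
          rw [← h2, hz]
        show Quotient.mk (hedgehogSetoid I) (⟨s a, hs0 a, hs1 a⟩, idx (a : X)) = f a
        conv_rhs => rw [← Quotient.out_eq (f a)]
        apply Quotient.sound
        exact Or.inl ⟨hs_a, hout1⟩
    have hFcont : Continuous F := by
      rw [continuous_iff_continuousAt]
      intro x
      refine Metric.tendsto_nhds.mpr ?_
      intro ε hε
      by_cases hx : ∃ i, x ∈ W i
      · obtain ⟨i, hxi⟩ := hx
        have hopen : IsOpen (W i ∩ {y | |hm i y - hm i x| < ε}) := by
          apply (hWopen i).inter
          have hcont2 : Continuous fun y => |hm i y - hm i x| :=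
            ((hmcont i).sub continuous_const).abs
          exact isOpen_lt hcont2 continuous_const
        have hmem : x ∈ W i ∩ {y | |hm i y - hm i x| < ε} :=
          ⟨hxi, by simp only [Set.mem_setOf_eq, sub_self, abs_zero]; exact hε⟩
        filter_upwards [hopen.mem_nhds hmem] with y hy
        have h1 : idx y = i := hidx y i hy.1
        have h2 : idx x = i := hidx x i hxi
        have hdeq : dist (F y) (F x) = |s y - s x| := by
          show hedgehogDist _ _ = _
          simp only [hFdef]
          rw [hedgehogDist_mk, if_pos (h1.trans h2.symm)]
        rw [hdeq, hsW y i hy.1, hsW x i hxi]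
        exact hy.2
      · push_neg at hx
        have hgx : g x = 0 := hgvan x (fun hw => by
          obtain ⟨i, hi⟩ := Set.mem_iUnion.mp hw
          exact hx i hi)
        have hopen : IsOpen {y | g y < ε} := isOpen_lt hgcont continuous_const
        have hmem : x ∈ {y | g y < ε} := by
          simp only [Set.mem_setOf_eq, hgx]
          exact hε
        filter_upwards [hopen.mem_nhds hmem] with y hy
        have hb : dist (F y) (F x) ≤ s y + s x := by
          show hedgehogDist _ _ ≤ _
          simp only [hFdef]
          exact hedgehogDist_mk_le _ _
        have hsx : s x = 0 := hsvan x hx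
        have hsyg : s y ≤ g y := hsg y
        have hyε : g y < ε := hy
        calc dist (F y) (F x) ≤ s y + s x := hb
          _ = s y := by rw [hsx, add_zero]
          _ ≤ g y := hsyg
          _ < ε := hyε
    exact ⟨F, hFcont, hFrestrict⟩
  · intro hext ι Fam hι hFc hFd
    obtain ⟨e⟩ : Nonempty (ι ≃ I) := Cardinal.eq.mp (hι.trans hI.symm)
    set A : Set X := ⋃ i, Fam i with hAdef
    have hAc : IsClosed A := hFd.isClosed_iUnion hFc
    have hmem : ∀ a : A, ∃ i, (a : X) ∈ Fam i := fun a => Set.mem_iUnion.mp a.2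
    choose ix hix using hmem
    have hix_unique : ∀ (a : A) (i : ι), (a : X) ∈ Fam i → ix a = i := by
      intro a i hi
      obtain ⟨N, hN, hsub⟩ := hFd (a : X)
      have haN : (a : X) ∈ N := mem_of_mem_nhds hN
      exact hsub ⟨(a : X), hix a, haN⟩ ⟨(a : X), hi, haN⟩
    have hone : (1:ℝ) ∈ Set.Icc (0:ℝ) 1 := by norm_num
    set pt : ι → Hedgehog I := fun i => Quotient.mk (hedgehogSetoid I) (⟨1, hone⟩, e i)
      with hptdef
    set f : A → Hedgehog I := fun a => pt (ix a) with hfdef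
    have hfcont : Continuous f := by
      rw [continuous_iff_continuousAt]
      intro a
      obtain ⟨N, hN, hsub⟩ := hFd (a : X)
      have hNa : (Subtype.val ⁻¹' N : Set A) ∈ 𝓝 a :=
        continuous_subtype_val.continuousAt.preimage_mem_nhds hN
      have heq : f =ᶠ[𝓝 a] fun _ => f a := by
        filter_upwards [hNa] with b hb
        have haN : (a : X) ∈ N := mem_of_mem_nhds hN
        have h1 : ix b = ix a := hsub ⟨(b : X), hix b, hb⟩ ⟨(a : X), hix a, haN⟩
        simp only [hfdef, h1]
      exact heq.continuousAt
    obtain ⟨G, hGc, hGA⟩ := hext A hAc f hfcont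
    have hGc' : Continuous G := hGc
    refine ⟨fun i => G ⁻¹' Metric.ball (pt i) 1,
      fun i => (Metric.isOpen_ball).preimage hGc', ?_, ?_⟩
    · intro i j hij
      rw [Set.disjoint_left]
      intro x hxi hxj
      have h2 : dist (pt i) (pt j) = 2 := by
        show hedgehogDist _ _ = 2
        rw [hptdef]
        rw [hedgehogDist_mk]
        rw [if_neg (fun h => hij (e.injective h))]
        norm_num
      have t1 : dist (G x) (pt i) < 1 := hxi
      have t2 : dist (G x) (pt j) < 1 := hxj
      have htri := dist_triangle (pt i) (G x) (pt j)
      rw [dist_comm (pt i) (G x)] at htri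
      rw [h2] at htri
      linarith
    · intro i x hx
      have hxA : x ∈ A := Set.mem_iUnion.mpr ⟨i, hx⟩
      have hGx : G x = pt i := by
        have h1 := hGA ⟨x, hxA⟩
        have h2 : ix ⟨x, hxA⟩ = i := hix_unique ⟨x, hxA⟩ i hx
        rw [h1]
        simp only [hfdef, h2]
      simp only [Set.mem_preimage, hGx, Metric.mem_ball, dist_self]
      norm_num
end

section
/- Let κ be a cardinal, X a κ-collectionwise normal topological space, and F ⊆ X an F_σ-set (a countable union of closed sets). Then F, with the subspace topology, is κ-collectionwise normal. -/
open Set Topology Cardinal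

universe u v

/-- Any subfamily union of a discrete family of closed sets is closed. -/
theorem isClosed_biUnion_of_discrete {Y : Type*} [TopologicalSpace Y] {ι : Type*}
    {G : ι → Set Y} (hG : ∀ i, IsClosed (G i)) (hd : IsDiscreteFamily G) (S : Set ι) :
    IsClosed (⋃ j ∈ S, G j) := by
  rw [← closure_subset_iff_isClosed]
  intro x hx
  obtain ⟨N, hN, hsub⟩ := hd x
  obtain ⟨y, hyN, hy⟩ := mem_closure_iff_nhds.mp hx N hN
  obtain ⟨j₀, hj₀S, hyj₀⟩ := Set.mem_iUnion₂.mp hy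
  have hx0 : x ∈ closure (G j₀) := by
    rw [mem_closure_iff_nhds]
    intro t ht
    obtain ⟨z, hz1, hz2⟩ := mem_closure_iff_nhds.mp hx (t ∩ N) (Filter.inter_mem ht hN)
    obtain ⟨j, hjS, hzj⟩ := Set.mem_iUnion₂.mp hz2
    have hjj : j = j₀ := hsub ⟨z, hzj, hz1.2⟩ ⟨y, hyj₀, hyN⟩
    exact ⟨z, hz1.1, hjj ▸ hzj⟩
  exact Set.mem_biUnion hj₀S ((hG j₀).closure_subset hx0)

/-- `κ`-collectionwise normality is hereditary with respect to `F_σ`-sets. -/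
theorem collectionwiseNormal_of_Fsigma (κ : Cardinal.{u}) (X : Type v) [TopologicalSpace X]
    (hX : IsCollectionwiseNormalWrt κ X) (F : Set X)
    (hF : ∃ C : ℕ → Set X, (∀ n, IsClosed (C n)) ∧ F = ⋃ n, C n) :
    IsCollectionwiseNormalWrt κ F := by
  classical
  obtain ⟨C, hCclosed, hFC⟩ := hF
  intro ι Fi hι hFicl hFidisc
  by_cases h2 : ∃ i₀ i₁ : ι, i₀ ≠ i₁
  swap
  · exact ⟨fun _ => Set.univ, fun _ => isOpen_univ,
      fun i j hij => absurd ⟨i, j, hij⟩ h2, fun i => Set.subset_univ _⟩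
  have hCF : ∀ n, C n ⊆ F := fun n => hFC ▸ Set.subset_iUnion C n
  -- Step 0: `X` is normal, since `κ ≥ 2`.
  have hnorm : ∀ A B : Set X, IsClosed A → IsClosed B → Disjoint A B →
      ∃ u v : Set X, IsOpen u ∧ IsOpen v ∧ A ⊆ u ∧ B ⊆ v ∧ Disjoint u v := by
    obtain ⟨i₀, i₁, hi01⟩ := h2
    intro A B hA hB hAB
    set G : ι → Set X := fun i => if i = i₀ then A else if i = i₁ then B else ∅ with hG
    have hGcl : ∀ i, IsClosed (G i) := by
      intro i; simp only [hG]; split_ifs <;> first | exact hA | exact hB | exact isClosed_empty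
    have hGdisc : IsDiscreteFamily G := by
      intro x
      by_cases hx : x ∈ A
      · refine ⟨Bᶜ, hB.isOpen_compl.mem_nhds (Set.disjoint_left.mp hAB hx), ?_⟩
        have hkey : ∀ k, (G k ∩ Bᶜ).Nonempty → k = i₀ := by
          intro k hk
          by_contra hki
          obtain ⟨y, hy1, hy2⟩ := hk
          simp only [hG, if_neg hki] at hy1
          split_ifs at hy1 with h
          · exact hy2 hy1
          · exact hy1
        intro i hi j hj
        rw [hkey i hi, hkey j hj]
      · refine ⟨Aᶜ, hA.isOpen_compl.mem_nhds hx, ?_⟩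
        have hkey : ∀ k, (G k ∩ Aᶜ).Nonempty → k = i₁ := by
          intro k hk
          obtain ⟨y, hy1, hy2⟩ := hk
          simp only [hG] at hy1
          split_ifs at hy1 with h h'
          · exact absurd hy1 hy2
          · exact h'
          · exact absurd hy1 (Set.notMem_empty y)
        intro i hi j hj
        rw [hkey i hi, hkey j hj]
    obtain ⟨U, hUop, hUdisj, hUsub⟩ := hX ι G hι hGcl hGdisc
    refine ⟨U i₀, U i₁, hUop i₀, hUop i₁, ?_, ?_, hUdisj hi01⟩
    · have : G i₀ = A := by simp [hG]
      exact this ▸ hUsub i₀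
    · have : G i₁ = B := by simp [hG, Ne.symm hi01]
      exact this ▸ hUsub i₁
  have hshrink : ∀ D O : Set X, IsClosed D → IsOpen O → D ⊆ O →
      ∃ W, IsOpen W ∧ D ⊆ W ∧ closure W ⊆ O := by
    intro D O hD hO hDO
    obtain ⟨u, v, hu, hv, hDu, hOv, huv⟩ :=
      hnorm D Oᶜ hD hO.isClosed_compl (Set.disjoint_left.mpr fun x hx hx' => hx' (hDO hx))
    refine ⟨u, hu, hDu, ?_⟩
    have h1 : v ∩ closure u = ∅ := by
      have h := hv.inter_closure (t := u)
      rw [Set.disjoint_iff_inter_eq_empty.mp huv.symm, closure_empty] at h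
      exact Set.subset_empty_iff.mp h
    intro x hx
    by_contra hxO
    have hxv : x ∈ v := hOv hxO
    have hmem : x ∈ v ∩ closure u := Set.mem_inter hxv hx
    rw [h1] at hmem
    exact hmem
  -- Step 1: The images of the `Fi` in `X`.
  set A : ι → Set X := fun i => Subtype.val '' Fi i with hA
  have hAF : ∀ i, A i ⊆ F := by rintro i x ⟨p, _, rfl⟩; exact p.2
  have hrel : ∀ S : Set ι, closure (⋃ j ∈ S, A j) ∩ F ⊆ ⋃ j ∈ S, A j := by
    intro S
    have hT : IsClosed (⋃ j ∈ S, Fi j) := isClosed_biUnion_of_discrete hFicl hFidisc S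
    obtain ⟨t, htcl, htpre⟩ := isClosed_induced_iff.mp hT
    have himg : (⋃ j ∈ S, A j) = F ∩ t := by
      calc (⋃ j ∈ S, A j) = Subtype.val '' (⋃ j ∈ S, Fi j) := by
            simp only [hA, Set.image_iUnion]
        _ = Subtype.val '' (Subtype.val ⁻¹' t) := by rw [htpre]
        _ = F ∩ t := Subtype.image_preimage_coe F t
    rintro x ⟨hxc, hxF⟩
    rw [himg]
    refine ⟨hxF, ?_⟩
    have hsub : closure (⋃ j ∈ S, A j) ⊆ t :=
      closure_minimal (himg ▸ Set.inter_subset_right) htcl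
    exact hsub hxc
  have hAdisj : ∀ i j, i ≠ j → A i ∩ A j = ∅ := by
    intro i j hij
    by_contra h
    obtain ⟨x, hxi, hxj⟩ := Set.nonempty_iff_ne_empty.mpr h
    obtain ⟨p, hp, rfl⟩ := hxi
    obtain ⟨q, hq, hqe⟩ := hxj
    have hqp : q = p := Subtype.coe_injective hqe
    obtain ⟨N, hN, hsub⟩ := hFidisc p
    exact hij (hsub ⟨p, hp, mem_of_mem_nhds hN⟩ ⟨p, hqp ▸ hq, mem_of_mem_nhds hN⟩)
  -- Step 2: The slices `A i ∩ C n` are closed in `X` and discrete (for each `n`).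
  have hGeq : ∀ (n : ℕ) i, A i ∩ C n = closure (A i) ∩ C n := by
    intro n i
    refine Set.Subset.antisymm (Set.inter_subset_inter_left _ subset_closure) ?_
    rintro x ⟨hx1, hx2⟩
    have hx : x ∈ ⋃ j ∈ ({i} : Set ι), A j := by
      refine hrel {i} ⟨?_, hCF n hx2⟩
      rwa [Set.biUnion_singleton]
    rw [Set.biUnion_singleton] at hx
    exact ⟨hx, hx2⟩
  have hGcl : ∀ (n : ℕ) i, IsClosed (A i ∩ C n) := by
    intro n i
    rw [hGeq n i]
    exact isClosed_closure.inter (hCclosed n)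
  have hGdisc : ∀ n : ℕ, IsDiscreteFamily (fun i => A i ∩ C n) := by
    intro n x
    by_cases hxF : x ∈ F
    · obtain ⟨N, hN, hsub⟩ := hFidisc ⟨x, hxF⟩
      rw [nhds_subtype_eq_comap] at hN
      obtain ⟨O, hO, hON⟩ := hN
      refine ⟨O, hO, ?_⟩
      have hkey : ∀ i, ((A i ∩ C n) ∩ O).Nonempty → (Fi i ∩ N).Nonempty := by
        rintro i ⟨y, ⟨⟨hyA, _⟩, hyO⟩⟩
        obtain ⟨p, hp, rfl⟩ := hyA
        exact ⟨p, hp, hON hyO⟩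
      intro i hi j hj
      exact hsub (hkey i hi) (hkey j hj)
    · refine ⟨(C n)ᶜ, (hCclosed n).isOpen_compl.mem_nhds (fun h => hxF (hCF n h)), ?_⟩
      rintro i ⟨y, ⟨⟨_, hyC⟩, hyNC⟩⟩
      exact absurd hyC hyNC
  -- Step 3: separate each slice family by disjoint open sets.
  choose V hVop hVdisj hVsub using fun n : ℕ =>
    hX ι (fun i => A i ∩ C n) hι (hGcl n) (hGdisc n)
  -- Step 4: shrink away from the closures of the other spines.
  set E : ι → Set X := fun i => closure (⋃ j ∈ ({i}ᶜ : Set ι), A j) with hE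
  have hAE : ∀ i j, i ≠ j → A j ⊆ E i := by
    intro i j hij
    exact (Set.subset_biUnion_of_mem (show j ∈ ({i}ᶜ : Set ι) from Ne.symm hij)).trans
      subset_closure
  have hAEi : ∀ i, A i ∩ E i = ∅ := by
    intro i
    rw [Set.eq_empty_iff_forall_notMem]
    rintro x ⟨hxA, hxE⟩
    have hxU : x ∈ ⋃ j ∈ ({i}ᶜ : Set ι), A j := hrel _ ⟨hxE, hAF i hxA⟩
    obtain ⟨j, hji, hxj⟩ := Set.mem_iUnion₂.mp hxU
    have : A i ∩ A j = ∅ := hAdisj i j (Ne.symm hji)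
    exact absurd ⟨hxA, hxj⟩ (this ▸ Set.notMem_empty x)
  set Vb : ℕ → ι → Set X := fun n i => V n i \ E i with hVb
  have hVbop : ∀ n i, IsOpen (Vb n i) := fun n i => (hVop n i).sdiff isClosed_closure
  have hVbsub : ∀ n i, A i ∩ C n ⊆ Vb n i := by
    rintro n i x ⟨hxA, hxC⟩
    refine ⟨hVsub n i ⟨hxA, hxC⟩, fun hxE => ?_⟩
    exact absurd ⟨hxA, hxE⟩ ((hAEi i) ▸ Set.notMem_empty x)
  have hVbA : ∀ n i j, i ≠ j → Vb n i ∩ A j = ∅ := by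
    intro n i j hij
    rw [Set.eq_empty_iff_forall_notMem]
    rintro x ⟨⟨_, hxE⟩, hxA⟩
    exact hxE (hAE i j hij hxA)
  -- Step 5: a normality shrinking around the union of all spines, level by level.
  have hDcl : ∀ n : ℕ, IsClosed (closure (⋃ j, A j) ∩ C n) :=
    fun n => isClosed_closure.inter (hCclosed n)
  have hDsub : ∀ n : ℕ, closure (⋃ j, A j) ∩ C n ⊆ ⋃ i, Vb n i := by
    rintro n x ⟨hxc, hxC⟩
    have hx : x ∈ ⋃ j ∈ (Set.univ : Set ι), A j := by
      refine hrel Set.univ ⟨?_, hCF n hxC⟩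
      rwa [Set.biUnion_univ]
    rw [Set.biUnion_univ] at hx
    obtain ⟨j, hxj⟩ := Set.mem_iUnion.mp hx
    exact Set.mem_iUnion.mpr ⟨j, hVbsub n j ⟨hxj, hxC⟩⟩
  choose W hWop hWsub hWcl using fun n : ℕ =>
    hshrink (closure (⋃ j, A j) ∩ C n) (⋃ i, Vb n i) (hDcl n)
      (isOpen_iUnion (hVbop n)) (hDsub n)
  set V' : ℕ → ι → Set X := fun n i => Vb n i ∩ W n with hV'
  have hV'op : ∀ n i, IsOpen (V' n i) := fun n i => (hVbop n i).inter (hWop n)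
  have hV'sub : ∀ n i, A i ∩ C n ⊆ V' n i := by
    rintro n i x hx
    refine ⟨hVbsub n i hx, hWsub n ⟨subset_closure (Set.mem_iUnion.mpr ⟨i, hx.1⟩), hx.2⟩⟩
  set Cl : ℕ → ι → Set X := fun m i => closure (⋃ j ∈ ({i}ᶜ : Set ι), V' m j) with hCl
  -- Key: the spine `A i` avoids the closure of the other `V'` sets at every level.
  have hkey : ∀ (m : ℕ) i, ∀ x ∈ A i, x ∉ Cl m i := by
    intro m i x hxA hxCl
    have hx1 : x ∈ ⋃ k, Vb m k := by
      refine hWcl m ?_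
      refine closure_mono ?_ hxCl
      rintro y hy
      obtain ⟨j, _, hyj⟩ := Set.mem_iUnion₂.mp hy
      exact hyj.2
    obtain ⟨k, hxk⟩ := Set.mem_iUnion.mp hx1
    by_cases hki : k = i
    · subst hki
      have hdis : Vb m k ∩ ⋃ j ∈ ({k}ᶜ : Set ι), V' m j = ∅ := by
        rw [Set.eq_empty_iff_forall_notMem]
        rintro y ⟨hy1, hy2⟩
        obtain ⟨j, hjk, hyj⟩ := Set.mem_iUnion₂.mp hy2
        have hdj : Disjoint (V m k) (V m j) := hVdisj m (Ne.symm hjk)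
        exact Set.disjoint_left.mp hdj hy1.1 hyj.1.1
      have := (hVbop m k).inter_closure (t := ⋃ j ∈ ({k}ᶜ : Set ι), V' m j)
      rw [hdis, closure_empty] at this
      exact this ⟨hxk, hxCl⟩
    · exact absurd ⟨hxk, hxA⟩ ((hVbA m k i hki) ▸ Set.notMem_empty x)
  -- Step 6: the final open sets.
  set R : ℕ → ι → Set X := fun n i => ⋃ m ∈ Set.Iic n, Cl m i with hR
  have hRcl : ∀ n i, IsClosed (R n i) :=
    fun n i => (Set.finite_Iic n).isClosed_biUnion fun m _ => isClosed_closure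
  refine ⟨fun i => Subtype.val ⁻¹' (⋃ n, (V' n i \ R n i)), ?_, ?_, ?_⟩
  · intro i
    exact (isOpen_iUnion fun n => (hV'op n i).sdiff (hRcl n i)).preimage
      continuous_subtype_val
  · intro i j hij
    rw [Set.disjoint_left]
    rintro p hpi hpj
    obtain ⟨n, hpn⟩ := Set.mem_iUnion.mp hpi
    obtain ⟨n', hpn'⟩ := Set.mem_iUnion.mp hpj
    rcases le_total n n' with h | h
    · refine hpn'.2 (Set.mem_biUnion h ?_)
      exact subset_closure (Set.mem_biUnion (show i ∈ ({j}ᶜ : Set ι) from hij) hpn.1)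
    · refine hpn.2 (Set.mem_biUnion h ?_)
      exact subset_closure (Set.mem_biUnion (show j ∈ ({i}ᶜ : Set ι) from Ne.symm hij) hpn'.1)
  · intro i p hp
    have hpA : (p : X) ∈ A i := ⟨p, hp, rfl⟩
    have hpF : (p : X) ∈ ⋃ n, C n := hFC ▸ p.2
    obtain ⟨n, hpn⟩ := Set.mem_iUnion.mp hpF
    refine Set.mem_iUnion.mpr ⟨n, hV'sub n i ⟨hpA, hpn⟩, ?_⟩
    intro hpR
    obtain ⟨m, _, hpm⟩ := Set.mem_iUnion₂.mp hpR
    exact hkey m i _ hpA hpm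
end

section
/- Let X be a metrizable topological space of weight κ ≤ 𝔠 (the cardinality of the continuum). Then there exists a separable metrizable space Y and a continuous bijection F : X → Y. -/
open Set Topology Cardinal

universe u v

section Aux

variable {X : Type u}

/-- Stone-type construction: for every `δ > 0` there is a countable collection of
`2⁻¹ ^ m`-separated families of open sets, each contained in a ball of radius `δ`,
which together cover the space. -/
lemma exists_discrete_refinement [MetricSpace X] (δ : ℝ) (hδ : 0 < δ) :
    ∃ D : ℕ → X → Set X,
      (∀ m z, IsOpen (D m z)) ∧
      (∀ m z, D m z ⊆ Metric.ball z δ) ∧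
      (∀ x, ∃ m z, x ∈ D m z) ∧
      (∀ m z z' x y, z ≠ z' → x ∈ D m z → y ∈ D m z' → (2⁻¹ : ℝ) ^ m ≤ dist x y) := by
  obtain ⟨inst1, inst2⟩ := exists_wellOrder X
  have hnonempty : ∀ x : X, ({z | x ∈ Metric.ball z δ} : Set X).Nonempty :=
    fun x => ⟨x, Metric.mem_ball_self hδ⟩
  set ind : X → X := fun x => wellFounded_lt.min {z | x ∈ Metric.ball z δ} (hnonempty x)
    with hind
  have mem_ind : ∀ x, x ∈ Metric.ball (ind x) δ := fun x =>
    wellFounded_lt.min_mem _ (hnonempty x)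
  have nmem_of_lt_ind : ∀ {x z}, z < ind x → x ∉ Metric.ball z δ := fun {x z} hlt hx =>
    wellFounded_lt.not_lt_min {z | x ∈ Metric.ball z δ} (x := z) hx hlt
  refine ⟨fun m z => ⋃ (cc : X) (_ : ind cc = z)
      (_ : Metric.ball cc (3 * (2⁻¹ : ℝ) ^ m) ⊆ Metric.ball z δ),
      Metric.ball cc ((2⁻¹ : ℝ) ^ m), ?_, ?_, ?_, ?_⟩
  · intro m z
    iterate 3 refine isOpen_iUnion fun _ => ?_
    exact Metric.isOpen_ball
  · intro m z x hx
    simp only [mem_iUnion] at hx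
    obtain ⟨cc, hcz, hsub, hx⟩ := hx
    apply hsub
    rw [Metric.mem_ball] at hx ⊢
    have : (0:ℝ) < (2⁻¹ : ℝ) ^ m := by positivity
    linarith
  · intro x
    have hopen : IsOpen (Metric.ball (ind x) δ) := Metric.isOpen_ball
    obtain ⟨ε, hε, hsub⟩ := Metric.isOpen_iff.mp hopen x (mem_ind x)
    obtain ⟨m, hm⟩ := exists_pow_lt_of_lt_one (show (0:ℝ) < ε / 3 by linarith)
      (show (2⁻¹ : ℝ) < 1 by norm_num)
    refine ⟨m, ind x, ?_⟩
    simp only [mem_iUnion]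
    refine ⟨x, rfl, ?_, Metric.mem_ball_self (by positivity)⟩
    refine Subset.trans (Metric.ball_subset_ball ?_) hsub
    linarith
  · intro m z z' x y hne hx hy
    have key : ∀ z z' x y, z < z' →
        x ∈ (⋃ (cc : X) (_ : ind cc = z)
          (_ : Metric.ball cc (3 * (2⁻¹ : ℝ) ^ m) ⊆ Metric.ball z δ),
          Metric.ball cc ((2⁻¹ : ℝ) ^ m)) →
        y ∈ (⋃ (cc : X) (_ : ind cc = z')
          (_ : Metric.ball cc (3 * (2⁻¹ : ℝ) ^ m) ⊆ Metric.ball z' δ),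
          Metric.ball cc ((2⁻¹ : ℝ) ^ m)) →
        (2⁻¹ : ℝ) ^ m ≤ dist x y := by
      intro z z' x y hlt hx hy
      simp only [mem_iUnion] at hx hy
      obtain ⟨c, hcz, hcsub, hxc⟩ := hx
      obtain ⟨c', hcz', _, hyc'⟩ := hy
      have hc'nmem : c' ∉ Metric.ball z δ := by
        apply nmem_of_lt_ind
        rw [hcz']; exact hlt
      have hc'far : c' ∉ Metric.ball c (3 * (2⁻¹ : ℝ) ^ m) := fun h => hc'nmem (hcsub h)
      rw [Metric.mem_ball, not_lt] at hc'far
      rw [Metric.mem_ball] at hxc hyc'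
      have h1 : dist c' c ≤ dist c' y + dist y x + dist x c := by
        calc dist c' c ≤ dist c' x + dist x c := dist_triangle _ _ _
          _ ≤ (dist c' y + dist y x) + dist x c := by
              have := dist_triangle c' y x; linarith
      have h2 : dist c' y = dist y c' := dist_comm _ _
      have h3 : dist y x = dist x y := dist_comm _ _
      linarith
    rcases hne.lt_or_gt with h | h
    · exact key z z' x y h hx hy
    · rw [dist_comm]; exact key z' z y x h hy hx

open Classical in
/-- Given a family `A` of sets and coefficients `c`, the function which at `x` takes value
`c z * infDist x (A z)ᶜ` if `x` lies in the (unique) member `A z`, and `0` otherwise. -/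
noncomputable def famFun [MetricSpace X] (A : X → Set X) (c : X → ℝ) (x : X) : ℝ :=
  if h : ∃ z, x ∈ A z then c h.choose * Metric.infDist x (A h.choose)ᶜ else 0

section famFun

variable [MetricSpace X] {A : X → Set X} {c : X → ℝ} {ε : ℝ}

lemma famFun_mem_unique (hsep : ∀ z z' x y, z ≠ z' → x ∈ A z → y ∈ A z' → ε ≤ dist x y)
    (hε : 0 < ε) {x z z'} (hz : x ∈ A z) (hz' : x ∈ A z') : z = z' := by
  by_contra h
  have h1 := hsep z z' x x h hz hz'
  have h2 : dist x x = 0 := dist_self x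
  linarith

lemma famFun_eq (hsep : ∀ z z' x y, z ≠ z' → x ∈ A z → y ∈ A z' → ε ≤ dist x y)
    (hε : 0 < ε) {x z} (hz : x ∈ A z) :
    famFun A c x = c z * Metric.infDist x (A z)ᶜ := by
  have hex : ∃ w, x ∈ A w := ⟨z, hz⟩
  rw [famFun, dif_pos hex, famFun_mem_unique hsep hε hex.choose_spec hz]

lemma famFun_eq_zero {x} (hx : ¬∃ z, x ∈ A z) : famFun A c x = 0 := dif_neg hx

lemma famFun_continuous (hsep : ∀ z z' x y, z ≠ z' → x ∈ A z → y ∈ A z' → ε ≤ dist x y)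
    (hε : 0 < ε) : Continuous (famFun A c) := by
  rw [continuous_iff_continuousAt]
  intro x₀
  by_cases hx : ∃ p, dist p x₀ < ε / 2 ∧ ∃ z, p ∈ A z
  · obtain ⟨p, hp, z₀, hpz⟩ := hx
    have hcont : ContinuousAt (fun y => c z₀ * Metric.infDist y (A z₀)ᶜ) x₀ :=
      (continuous_const.mul (Metric.continuous_infDist_pt _)).continuousAt
    refine hcont.congr ?_
    filter_upwards [Metric.ball_mem_nhds x₀ (by linarith : (0:ℝ) < ε / 2)] with y hy
    rw [Metric.mem_ball] at hy
    by_cases hy' : ∃ z, y ∈ A z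
    · obtain ⟨z, hz⟩ := hy'
      have hzz : z = z₀ := by
        by_contra hne
        have h1 := hsep z z₀ y p hne hz hpz
        have h2 := dist_triangle y x₀ p
        have h3 : dist x₀ p = dist p x₀ := dist_comm _ _
        linarith
      subst hzz
      exact (famFun_eq hsep hε hz).symm
    · rw [famFun_eq_zero hy',
        Metric.infDist_zero_of_mem (show y ∈ (A z₀)ᶜ from fun h => hy' ⟨z₀, h⟩), mul_zero]
  · push_neg at hx
    have hcont : ContinuousAt (fun _ : X => (0:ℝ)) x₀ := continuousAt_const
    refine hcont.congr ?_
    filter_upwards [Metric.ball_mem_nhds x₀ (by linarith : (0:ℝ) < ε / 2)] with y hy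
    rw [Metric.mem_ball] at hy
    rw [famFun_eq_zero]
    rintro ⟨z, hz⟩
    exact absurd hz (hx y hy z)

end famFun

end Aux

/-- Every metrizable space of weight at most the continuum admits a continuous bijection
onto a separable metrizable space. -/
theorem exists_continuous_bijection_onto_separable (X : Type u) [TopologicalSpace X]
    [TopologicalSpace.MetrizableSpace X] (hw : weight X ≤ Cardinal.continuum) :
    ∃ (Y : Type u) (tY : TopologicalSpace Y),
      @TopologicalSpace.MetrizableSpace Y tY ∧ @TopologicalSpace.SeparableSpace Y tY ∧
        ∃ F : X → Y, Function.Bijective F ∧ @Continuous X Y _ tY F := by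
  classical
  letI m := TopologicalSpace.metrizableSpaceMetric X
  -- a basis of minimal cardinality
  have hne : {c : Cardinal.{u} | ∃ B : Set (Set X),
      TopologicalSpace.IsTopologicalBasis B ∧ #B = c}.Nonempty :=
    ⟨_, {U : Set X | IsOpen U}, TopologicalSpace.isTopologicalBasis_opens, rfl⟩
  obtain ⟨B, hB, hBcard⟩ := csInf_mem hne
  have hBle : #B ≤ Cardinal.continuum := hBcard ▸ hw
  -- the space has cardinality at most the continuum
  have hXle : #X ≤ Cardinal.continuum := by
    have h : ∀ (x : X) (n : ℕ), ∃ v ∈ B, x ∈ v ∧ v ⊆ Metric.ball x ((2⁻¹ : ℝ) ^ n) :=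
      fun x n => hB.exists_subset_of_mem_open (Metric.mem_ball_self (by positivity))
        Metric.isOpen_ball
    choose v hvB hxv hvsub using h
    have hinj : Function.Injective
        (fun x => fun n : ULift.{u} ℕ => (⟨v x n.down, hvB x n.down⟩ : B)) := by
      intro x y hxy
      have hd : ∀ n : ℕ, dist y x < (2⁻¹ : ℝ) ^ n := by
        intro n
        have h1 : v x n = v y n := congrArg Subtype.val (congrFun hxy ⟨n⟩)
        have h2 : y ∈ v x n := h1 ▸ hxv y n
        exact Metric.mem_ball.mp (hvsub x n h2)
      by_contra hne'
      have hpos : 0 < dist y x := dist_pos.mpr fun h => hne' h.symm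
      obtain ⟨n, hn⟩ := exists_pow_lt_of_lt_one hpos (show (2⁻¹ : ℝ) < 1 by norm_num)
      exact absurd (hd n) (not_lt.mpr hn.le)
    calc #X ≤ #(ULift.{u} ℕ → B) := Cardinal.mk_le_of_injective hinj
      _ = #B ^ (ℵ₀ : Cardinal.{u}) := by
        rw [Cardinal.mk_arrow]
        simp [Cardinal.mk_uLift]
      _ ≤ Cardinal.continuum ^ (ℵ₀ : Cardinal.{u}) := Cardinal.power_le_power_right hBle
      _ = Cardinal.continuum := Cardinal.continuum_power_aleph0
  -- an injection into the reals
  obtain ⟨r⟩ : Nonempty (X ↪ ℝ) := by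
    rw [← Cardinal.lift_mk_le']
    rw [Cardinal.mk_real, Cardinal.lift_continuum]
    exact (Cardinal.lift_le_continuum).mpr hXle
  -- discrete refinements at all scales
  have hfam : ∀ N : ℕ, ∃ D : ℕ → X → Set X,
      (∀ m z, IsOpen (D m z)) ∧
      (∀ m z, D m z ⊆ Metric.ball z ((2⁻¹ : ℝ) ^ N)) ∧
      (∀ x, ∃ m z, x ∈ D m z) ∧
      (∀ m z z' x y, z ≠ z' → x ∈ D m z → y ∈ D m z' → (2⁻¹ : ℝ) ^ m ≤ dist x y) :=
    fun N => exists_discrete_refinement _ (by positivity)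
  choose D hopen hsub hcov hsep using hfam
  set Z := (ℕ × ℕ) → ℝ × ℝ with hZ
  set F : X → Z := fun x p => (famFun (D p.1 p.2) (⇑r) x, famFun (D p.1 p.2) (fun _ => 1) x)
    with hF
  have hFcont : Continuous F := by
    refine continuous_pi fun p => Continuous.prodMk ?_ ?_ <;>
      exact famFun_continuous (hsep p.1 p.2) (by positivity)
  have hFinj : Function.Injective F := by
    intro x y hxy
    by_contra hne'
    have hd : 0 < dist x y := dist_pos.mpr hne'
    obtain ⟨N, hN⟩ := exists_pow_lt_of_lt_one (half_pos hd) (show (2⁻¹ : ℝ) < 1 by norm_num)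
    obtain ⟨mm, z, hxz⟩ := hcov N x
    have hyz : y ∉ D N mm z := by
      intro h
      have h1 := Metric.mem_ball.mp (hsub N mm z hxz)
      have h2 := Metric.mem_ball.mp (hsub N mm z h)
      have h3 := dist_triangle x z y
      have h4 : dist z y = dist y z := dist_comm _ _
      linarith
    have hsepm := hsep N mm
    have hεpos : (0:ℝ) < (2⁻¹ : ℝ) ^ mm := by positivity
    have hgx : famFun (D N mm) (fun _ => (1:ℝ)) x = Metric.infDist x (D N mm z)ᶜ := by
      rw [famFun_eq hsepm hεpos hxz, one_mul]
    have hgxpos : 0 < Metric.infDist x (D N mm z)ᶜ := by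
      refine ((IsClosed.notMem_iff_infDist_pos ?_ ⟨y, hyz⟩).mp ?_)
      · exact isClosed_compl_iff.mpr (hopen N mm z)
      · simpa using hxz
    have hcoord := congrFun hxy (N, mm)
    have hfeq : famFun (D N mm) (⇑r) x = famFun (D N mm) (⇑r) y :=
      congrArg Prod.fst hcoord
    have hgeq : famFun (D N mm) (fun _ => (1:ℝ)) x = famFun (D N mm) (fun _ => (1:ℝ)) y :=
      congrArg Prod.snd hcoord
    have hy' : ∃ z', y ∈ D N mm z' := by
      by_contra h
      rw [famFun_eq_zero h] at hgeq
      rw [hgeq] at hgx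
      exact absurd hgx.symm (ne_of_gt hgxpos)
    obtain ⟨z', hyz'⟩ := hy'
    have hzne : z ≠ z' := fun h => hyz (h ▸ hyz')
    have hgy : famFun (D N mm) (fun _ => (1:ℝ)) y = Metric.infDist y (D N mm z')ᶜ := by
      rw [famFun_eq hsepm hεpos hyz', one_mul]
    have hfx : famFun (D N mm) (⇑r) x = r z * Metric.infDist x (D N mm z)ᶜ :=
      famFun_eq hsepm hεpos hxz
    have hfy : famFun (D N mm) (⇑r) y = r z' * Metric.infDist y (D N mm z')ᶜ :=
      famFun_eq hsepm hεpos hyz'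
    have hinfeq : Metric.infDist x (D N mm z)ᶜ = Metric.infDist y (D N mm z')ᶜ := by
      rw [← hgx, ← hgy, hgeq]
    have hrz : (r z : ℝ) = r z' := by
      have := hfx.symm.trans (hfeq.trans hfy)
      rw [← hinfeq] at this
      exact mul_right_cancel₀ (ne_of_gt hgxpos) this
    exact hzne (r.injective hrz)
  -- conclude with the induced topology
  letI tZ : TopologicalSpace Z := inferInstance
  letI tY : TopologicalSpace X := TopologicalSpace.induced F tZ
  have hEmb : @Topology.IsEmbedding X Z tY tZ F := ⟨⟨rfl⟩, hFinj⟩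
  have hMet : @TopologicalSpace.MetrizableSpace X tY :=
    @Topology.IsEmbedding.metrizableSpace X Z tY tZ _ F hEmb
  have hSec : @SecondCountableTopology X tY := TopologicalSpace.secondCountableTopology_induced X Z F
  have hSep : @TopologicalSpace.SeparableSpace X tY :=
    @TopologicalSpace.SecondCountableTopology.to_separableSpace X tY hSec
  refine ⟨X, tY, hMet, hSep, id, Function.bijective_id, ?_⟩
  exact continuous_id_iff_le.mpr (continuous_iff_le_induced.mp hFcont)
end

section
/- Let κ ≥ ℵ₀ be a cardinal. Then every completely metrizable topological space of weight κ embeds as a closed subspace of the countable Cartesian power (MJ(κ))^ℕ of the metric hedgehog with κ spines (with the product topology); i.e., it is homeomorphic to a closed subset of (MJ(κ))^ℕ. -/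
open Set Topology Cardinal

universe u v

/-! ### Basic hedgehog API -/

namespace HedgehogAux

variable {I : Type u}

noncomputable scoped instance instHedgehogMetric (I : Type u) : MetricSpace (Hedgehog I) :=
  metricHedgehog I

lemma out_rel (p : Set.Icc (0:ℝ) 1 × I) :
    (((⟦p⟧ : Hedgehog I).out.1 : ℝ) = 0 ∧ (p.1 : ℝ) = 0) ∨ (⟦p⟧ : Hedgehog I).out = p :=
  Quotient.mk_out (s := hedgehogSetoid I) p

lemma out_fst (p : Set.Icc (0:ℝ) 1 × I) : ((⟦p⟧ : Hedgehog I).out.1 : ℝ) = p.1 := by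
  rcases out_rel p with ⟨h1, h2⟩ | h
  · rw [h1, h2]
  · rw [h]

lemma dist_def (x y : Hedgehog I) : dist x y = hedgehogDist x y := rfl

lemma dist_mk_same (t s : Set.Icc (0:ℝ) 1) (i : I) :
    dist (⟦(t, i)⟧ : Hedgehog I) ⟦(s, i)⟧ = |(t : ℝ) - s| := by
  have ht0 : (0:ℝ) ≤ t := t.2.1
  have hs0 : (0:ℝ) ≤ s := s.2.1
  rw [dist_def]
  unfold hedgehogDist
  rw [show (((⟦(t,i)⟧ : Hedgehog I).out.1 : ℝ)) = (t:ℝ) from out_fst _,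
    show (((⟦(s,i)⟧ : Hedgehog I).out.1 : ℝ)) = (s:ℝ) from out_fst _]
  split_ifs with h
  · rfl
  · have hts : (t : ℝ) = 0 ∨ (s : ℝ) = 0 := by
      rcases out_rel ((t, i) : Set.Icc (0:ℝ) 1 × I) with ⟨_, h1⟩ | h1
      · exact Or.inl h1
      · rcases out_rel ((s, i) : Set.Icc (0:ℝ) 1 × I) with ⟨_, h2⟩ | h2
        · exact Or.inr h2
        · exact absurd (by rw [h1, h2]) h
    rcases hts with h0 | h0 <;> rw [h0]
    · rw [zero_sub, abs_neg, abs_of_nonneg hs0, zero_add]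
    · rw [sub_zero, abs_of_nonneg ht0, add_zero]

lemma dist_mk_ne {i j : I} (hij : i ≠ j) (t s : Set.Icc (0:ℝ) 1) :
    dist (⟦(t, i)⟧ : Hedgehog I) ⟦(s, j)⟧ = (t : ℝ) + s := by
  have ht0 : (0:ℝ) ≤ t := t.2.1
  have hs0 : (0:ℝ) ≤ s := s.2.1
  rw [dist_def]
  unfold hedgehogDist
  rw [show (((⟦(t,i)⟧ : Hedgehog I).out.1 : ℝ)) = (t:ℝ) from out_fst _,
    show (((⟦(s,j)⟧ : Hedgehog I).out.1 : ℝ)) = (s:ℝ) from out_fst _]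
  split_ifs with h
  · have hts : (t : ℝ) = 0 ∨ (s : ℝ) = 0 := by
      rcases out_rel ((t, i) : Set.Icc (0:ℝ) 1 × I) with ⟨_, h1⟩ | h1
      · exact Or.inl h1
      · rcases out_rel ((s, j) : Set.Icc (0:ℝ) 1 × I) with ⟨_, h2⟩ | h2
        · exact Or.inr h2
        · exact absurd (by rw [h1, h2] at h; exact h) hij
    rcases hts with h0 | h0 <;> rw [h0]
    · rw [zero_sub, abs_neg, abs_of_nonneg hs0, zero_add]
    · rw [sub_zero, abs_of_nonneg ht0, add_zero]
  · rfl

lemma zero_mk (i j : I) : (⟦(⟨0, by norm_num⟩, i)⟧ : Hedgehog I) = ⟦(⟨0, by norm_num⟩, j)⟧ :=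
  Quotient.sound (Or.inl ⟨rfl, rfl⟩)

open Classical in
lemma proj_mk (k : I) (t : Set.Icc (0:ℝ) 1) (j : I) :
    hedgehogProj k (⟦(t, j)⟧ : Hedgehog I) = if j = k then t else ⟨0, by norm_num⟩ := rfl

/-- coercivity: if proj i y = 0 then dist ⟦(t,i)⟧ y ≥ t. -/
lemma le_dist_of_proj_eq_zero {i : I} {t : Set.Icc (0:ℝ) 1} {y : Hedgehog I}
    (hy : (hedgehogProj i y : ℝ) = 0) : (t : ℝ) ≤ dist (⟦(t, i)⟧ : Hedgehog I) y := by
  induction y using Quotient.ind with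
  | _ p =>
    obtain ⟨s, j⟩ := p
    rw [proj_mk] at hy
    by_cases hji : j = i
    · subst hji
      rw [if_pos rfl] at hy
      rw [dist_mk_same]
      rw [hy, sub_zero, abs_of_nonneg t.2.1]
    · rw [dist_mk_ne (fun h => hji h.symm)]
      have := s.2.1
      linarith

lemma lipschitz_mk (i : I) :
    LipschitzWith 1 (fun t : Set.Icc (0:ℝ) 1 => (⟦(t, i)⟧ : Hedgehog I)) := by
  apply LipschitzWith.of_dist_le_mul
  intro t s
  simp only [dist_mk_same, NNReal.coe_one, one_mul, Subtype.dist_eq, Real.dist_eq]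
  exact le_refl _

end HedgehogAux
/-! ### Spine maps -/

namespace HedgehogAux

open Metric

variable {I : Type u} {X : Type v} {A : Type w}

open Classical in
/-- bump function attached to an open set -/
noncomputable def bump [MetricSpace X] (V : Set X) (x : X) : ℝ :=
  if V = Set.univ then 1 else min 1 (Metric.infDist x Vᶜ)

open Classical

lemma bump_mem [MetricSpace X] (V : Set X) (x : X) : bump V x ∈ Set.Icc (0:ℝ) 1 := by
  unfold bump
  split_ifs with h
  · norm_num
  · exact ⟨le_min zero_le_one Metric.infDist_nonneg, min_le_left _ _⟩

lemma bump_pos [MetricSpace X] {V : Set X} (hV : IsOpen V) {x : X} (hx : x ∈ V) :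
    0 < bump V x := by
  unfold bump
  split_ifs with h
  · norm_num
  · refine lt_min one_pos ?_
    have hne : Vᶜ.Nonempty := Set.nonempty_compl.mpr h
    exact (hV.isClosed_compl.notMem_iff_infDist_pos hne).mp (by simpa using hx)

lemma bump_eq_zero [MetricSpace X] {V : Set X} {x : X} (hx : x ∉ V) : bump V x = 0 := by
  unfold bump
  split_ifs with h
  · exact absurd (h ▸ Set.mem_univ x) hx
  · rw [Metric.infDist_zero_of_mem (show x ∈ Vᶜ from hx), min_eq_right zero_le_one]

lemma bump_continuous [MetricSpace X] (V : Set X) : Continuous (bump V) := by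
  unfold bump
  split_ifs with h
  · exact continuous_const
  · exact continuous_const.min (Metric.continuous_infDist_pt _)

/-- bump as an element of `Icc 0 1` -/
noncomputable def bumpI [MetricSpace X] (V : Set X) (x : X) : Set.Icc (0:ℝ) 1 :=
  ⟨bump V x, bump_mem V x⟩

open Classical in
/-- The map sending `x ∈ V a` to the point at height `bump (V a) x` on spine `ι a`. -/
noncomputable def spineMap [MetricSpace X] (V : A → Set X) (ι : A → I) (i₀ : I) (x : X) :
    Hedgehog I :=
  if h : ∃ a, x ∈ V a then ⟦(bumpI (V h.choose) x, ι h.choose)⟧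
  else ⟦(⟨0, by norm_num⟩, i₀)⟧

section spine

variable [MetricSpace X] {V : A → Set X} {ι : A → I} {i₀ : I}

lemma spineMap_eq_of_mem (hdj : ∀ a b (x : X), x ∈ V a → x ∈ V b → a = b)
    {x : X} {a : A} (hx : x ∈ V a) :
    spineMap V ι i₀ x = ⟦(bumpI (V a) x, ι a)⟧ := by
  unfold spineMap
  rw [dif_pos ⟨a, hx⟩]
  have := hdj (⟨a, hx⟩ : ∃ a, x ∈ V a).choose a x (⟨a, hx⟩ : ∃ a, x ∈ V a).choose_spec hx
  rw [this]

lemma proj_spineMap_of_not_mem (hι : Function.Injective ι) {x : X} {a : A} (hx : x ∉ V a) :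
    (hedgehogProj (ι a) (spineMap V ι i₀ x) : ℝ) = 0 := by
  unfold spineMap
  split_ifs with h
  · rw [proj_mk]
    have hne : h.choose ≠ a := fun he => hx (he ▸ h.choose_spec)
    rw [if_neg (fun hc => hne (hι hc))]
  · rw [proj_mk]
    split_ifs <;> rfl

/-- key geometric estimate -/
lemma bump_le_dist_spineMap (hdj : ∀ a b (x : X), x ∈ V a → x ∈ V b → a = b)
    (hι : Function.Injective ι) {x y : X} {a : A} (hx : x ∈ V a) (hy : y ∉ V a) :
    bump (V a) x ≤ dist (spineMap V ι i₀ x) (spineMap V ι i₀ y) := by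
  rw [spineMap_eq_of_mem hdj hx]
  exact le_dist_of_proj_eq_zero (t := bumpI (V a) x) (proj_spineMap_of_not_mem hι hy)

lemma spineMap_continuous (hop : ∀ a, IsOpen (V a))
    (hloc : ∀ x : X, ∃ ε > 0, {a | (V a ∩ Metric.ball x ε).Nonempty}.Subsingleton) :
    Continuous (spineMap V ι i₀) := by
  rw [continuous_iff_continuousAt]
  intro x
  obtain ⟨ε, hε, hsub⟩ := hloc x
  by_cases hA : ∃ a, (V a ∩ Metric.ball x ε).Nonempty
  · obtain ⟨a, ha⟩ := hA
    have hev : ∀ y ∈ Metric.ball x ε, spineMap V ι i₀ y = ⟦(bumpI (V a) y, ι a)⟧ := by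
      intro y hyb
      unfold spineMap
      split_ifs with h
      · have : h.choose = a := hsub ⟨y, h.choose_spec, hyb⟩ ha
        rw [this]
      · push_neg at h
        exact Quotient.sound (Or.inl ⟨rfl, bump_eq_zero (h a)⟩)
    have hg : Continuous (fun y : X => (⟦(bumpI (V a) y, ι a)⟧ : Hedgehog I)) := by
      exact (lipschitz_mk (ι a)).continuous.comp
        (Continuous.subtype_mk (bump_continuous (V a)) _)
    exact hg.continuousAt.congr
      (Filter.eventuallyEq_of_mem (Metric.ball_mem_nhds x hε) hev).symm
  · push_neg at hA
    have hev : ∀ y ∈ Metric.ball x ε, spineMap V ι i₀ y = ⟦(⟨0, by norm_num⟩, i₀)⟧ := by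
      intro y hyb
      unfold spineMap
      split_ifs with h
      · have hmem : y ∈ V h.choose ∩ Metric.ball x ε := ⟨h.choose_spec, hyb⟩
        rw [hA h.choose] at hmem
        exact absurd hmem (Set.notMem_empty y)
      · rfl
    exact continuousAt_const.congr
      (Filter.eventuallyEq_of_mem (Metric.ball_mem_nhds x hε) hev).symm

end spine

end HedgehogAux
/-! ### Rudin's construction of σ-discrete refinements -/

namespace HedgehogAux

open Metric

variable {X : Type v} {A : Type w}

/-- the centers at stage `n` -/
def rudinC [MetricSpace X] (r : A → A → Prop) (𝒰 : A → Set X) (n : ℕ)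
    (D : ∀ j, j < n → A → Set X) (a : A) : Set X :=
  {c : X | (c ∈ 𝒰 a ∧ ∀ b, r b a → c ∉ 𝒰 b) ∧ Metric.ball c (3 * (2:ℝ)⁻¹ ^ n) ⊆ 𝒰 a ∧
    ∀ j, ∀ h : j < n, ∀ b, c ∉ D j h b}

/-- Rudin's refinement -/
def rudinD [MetricSpace X] (r : A → A → Prop) (𝒰 : A → Set X) : ℕ → A → Set X
  | n => fun a =>
    ⋃ c ∈ rudinC r 𝒰 n (fun j _ b => rudinD r 𝒰 j b) a, Metric.ball c ((2:ℝ)⁻¹ ^ n)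

lemma rudinD_def [MetricSpace X] (r : A → A → Prop) (𝒰 : A → Set X) (n : ℕ) (a : A) :
    rudinD r 𝒰 n a =
      ⋃ c ∈ rudinC r 𝒰 n (fun j _ b => rudinD r 𝒰 j b) a, Metric.ball c ((2:ℝ)⁻¹ ^ n) := by
  rw [rudinD]

variable [MetricSpace X] {r : A → A → Prop} {𝒰 : A → Set X}

lemma rudinD_isOpen (n : ℕ) (a : A) : IsOpen (rudinD r 𝒰 n a) := by
  rw [rudinD_def]
  exact isOpen_biUnion (fun c _ => Metric.isOpen_ball)

lemma rudinD_subset (n : ℕ) (a : A) : rudinD r 𝒰 n a ⊆ 𝒰 a := by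
  rw [rudinD_def]
  refine Set.iUnion₂_subset (fun c hc => ?_)
  refine subset_trans (Metric.ball_subset_ball ?_) hc.2.1
  nlinarith [pow_pos (by norm_num : (0:ℝ) < 2⁻¹) n]

lemma rudinC_sep [IsTrichotomous A r] {n : ℕ} {a b : A} (hab : a ≠ b) {c c' : X}
    (hc : c ∈ rudinC r 𝒰 n (fun j _ b => rudinD r 𝒰 j b) a)
    (hc' : c' ∈ rudinC r 𝒰 n (fun j _ b => rudinD r 𝒰 j b) b) :
    3 * (2:ℝ)⁻¹ ^ n ≤ dist c c' := by
  by_contra hlt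
  push_neg at hlt
  rcases trichotomous_of r a b with h | h | h
  ·
    exact hc'.1.2 a h (hc.2.1 (by rwa [Metric.mem_ball, dist_comm]))
  · exact hab h
  · exact hc.1.2 b h (hc'.2.1 (by rwa [Metric.mem_ball]))

lemma rudinD_sep [IsTrichotomous A r] {n : ℕ} {a b : A} (hab : a ≠ b) {x y : X}
    (hx : x ∈ rudinD r 𝒰 n a) (hy : y ∈ rudinD r 𝒰 n b) :
    (2:ℝ)⁻¹ ^ n ≤ dist x y := by
  rw [rudinD_def] at hx hy
  simp only [Set.mem_iUnion, Metric.mem_ball] at hx hy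
  obtain ⟨c, hc, hxc⟩ := hx
  obtain ⟨c', hc', hyc⟩ := hy
  have h3 := rudinC_sep hab hc hc'
  have t1 := dist_triangle c x c'
  have t2 := dist_triangle x y c'
  have e1 := dist_comm c x
  have e2 := dist_comm c' y
  have e3 := dist_comm y c'
  linarith

/-- the families at each stage are (uniformly) discrete -/
lemma rudinD_discrete [IsTrichotomous A r] (n : ℕ) (x : X) :
    {a | (rudinD r 𝒰 n a ∩ Metric.ball x ((2:ℝ)⁻¹ ^ (n+1))).Nonempty}.Subsingleton := by
  rintro a ⟨u, hu, hub⟩ b ⟨v, hv, hvb⟩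
  by_contra hab
  have hs := rudinD_sep hab hu hv
  rw [Metric.mem_ball] at hub hvb
  have t1 := dist_triangle u x v
  have e1 := dist_comm x v
  have e2 := dist_comm v x
  have hpow : (2:ℝ)⁻¹ ^ (n+1) + (2:ℝ)⁻¹ ^ (n+1) = (2:ℝ)⁻¹ ^ n := by ring
  linarith

/-- covering property (needs a well order and an open cover) -/
lemma rudinD_covers (hwf : WellFounded r) (hop : ∀ a, IsOpen (𝒰 a))
    (hcov : ∀ x : X, ∃ a, x ∈ 𝒰 a) (x : X) : ∃ n a, x ∈ rudinD r 𝒰 n a := by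
  by_contra hno
  push_neg at hno
  have hS : {a | x ∈ 𝒰 a}.Nonempty := hcov x
  set a := hwf.min _ hS with ha
  have hxa : x ∈ 𝒰 a := hwf.min_mem _ hS
  obtain ⟨ε, hε, hball⟩ := Metric.isOpen_iff.mp (hop a) x hxa
  obtain ⟨n, hn⟩ : ∃ n : ℕ, 3 * (2:ℝ)⁻¹ ^ n < ε := by
    obtain ⟨n, hn⟩ := pow_unbounded_of_one_lt (3 / ε) (by norm_num : (1:ℝ) < 2)
    refine ⟨n, ?_⟩
    rw [inv_pow]
    rw [div_lt_iff₀ hε] at hn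
    rw [mul_comm] at hn
    have h2 : (0:ℝ) < 2 ^ n := by positivity
    rw [show (3:ℝ) * ((2:ℝ)^n)⁻¹ = 3 / 2^n by ring, div_lt_iff₀ h2]
    nlinarith
  have hc : x ∈ rudinC r 𝒰 n (fun j _ b => rudinD r 𝒰 j b) a := by
    refine ⟨⟨hxa, fun b hb => ?_⟩, subset_trans (Metric.ball_subset_ball hn.le) hball, ?_⟩
    · exact fun hxb => hwf.not_lt_min _ hxb hb
    · exact fun j _ b => hno j b
  have : x ∈ rudinD r 𝒰 n a := by
    rw [rudinD_def]
    exact Set.mem_biUnion hc (Metric.mem_ball_self (by positivity))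
  exact hno n a this

end HedgehogAux
/-! ### The Kowalsky embedding -/

namespace HedgehogAux

open Metric Topology TopologicalSpace Filter Set

theorem exists_embedding (I : Type u) [Infinite I] (X : Type u) [MetricSpace X]
    (hw : weight X ≤ #I) : ∃ f : X → (ℕ × ℕ) → Hedgehog I, IsEmbedding f := by
  classical
  -- a basis realising the weight
  have hSne : {c : Cardinal.{u} | ∃ B : Set (Set X), IsTopologicalBasis B ∧ #B = c}.Nonempty :=
    ⟨_, ⟨{S | IsOpen S}, isTopologicalBasis_opens, rfl⟩⟩
  have hmem : ∃ B : Set (Set X), IsTopologicalBasis B ∧ #B = weight X := csInf_mem hSne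
  obtain ⟨B₀, hB₀, hcard⟩ := hmem
  -- the index type
  set T := {s : Set X // s ∈ B₀ ∧ s.Nonempty} with hT
  have hTle : #T ≤ #I := by
    refine le_trans (Cardinal.mk_le_of_injective
      (f := fun s : T => (⟨s.1, s.2.1⟩ : B₀)) ?_) (le_trans (le_of_eq hcard) hw)
    intro a b hab
    exact Subtype.ext (Subtype.ext_iff.mp (by simpa [Subtype.ext_iff] using hab))
  obtain ⟨ι⟩ : Nonempty (T ↪ I) := (Cardinal.le_def _ _).mp hTle
  -- centers
  let c : T → X := fun s => s.2.2.choose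
  have hc : ∀ s : T, c s ∈ s.1 := fun s => s.2.2.choose_spec
  -- well-order
  let r : T → T → Prop := WellOrderingRel
  haveI hwoi : IsWellOrder T r := WellOrderingRel.isWellOrder
  -- the families
  let V : ℕ × ℕ → T → Set X := fun p =>
    rudinD r (fun a => Metric.ball (c a) ((2:ℝ)⁻¹ ^ p.1)) p.2
  have hVopen : ∀ p a, IsOpen (V p a) := fun p a => rudinD_isOpen p.2 a
  have hVloc : ∀ (p : ℕ × ℕ) (x : X),
      ∃ ε > 0, {a | (V p a ∩ Metric.ball x ε).Nonempty}.Subsingleton := by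
    intro p x
    exact ⟨(2:ℝ)⁻¹ ^ (p.2 + 1), by positivity, rudinD_discrete p.2 x⟩
  have hVdj : ∀ (p : ℕ × ℕ) a b (x : X), x ∈ V p a → x ∈ V p b → a = b := by
    intro p a b x hxa hxb
    obtain ⟨ε, hε, hsub⟩ := hVloc p x
    exact hsub ⟨x, hxa, Metric.mem_ball_self hε⟩ ⟨x, hxb, Metric.mem_ball_self hε⟩
  have hcover : ∀ (n : ℕ) (x : X), ∃ a : T, x ∈ Metric.ball (c a) ((2:ℝ)⁻¹ ^ n) := by
    intro n x
    obtain ⟨S, hSB, hxS, hSsub⟩ := hB₀.exists_subset_of_mem_open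
      (Metric.mem_ball_self (show (0:ℝ) < (2:ℝ)⁻¹ ^ n by positivity)) Metric.isOpen_ball
    refine ⟨⟨S, hSB, ⟨x, hxS⟩⟩, ?_⟩
    have := hSsub (hc ⟨S, hSB, ⟨x, hxS⟩⟩)
    rw [Metric.mem_ball] at this ⊢
    rwa [dist_comm]
  have hVcov : ∀ (n : ℕ) (x : X), ∃ m a, x ∈ V (n, m) a := by
    intro n x
    exact rudinD_covers (IsWellFounded.wf) (fun a => Metric.isOpen_ball) (hcover n) x
  have hVsmall : ∀ (p : ℕ × ℕ) (a : T) (x y : X), x ∈ V p a → y ∈ V p a →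
      dist y x < 2 * (2:ℝ)⁻¹ ^ p.1 := by
    intro p a x y hx hy
    have h1 := rudinD_subset p.2 a hx
    have h2 := rudinD_subset p.2 a hy
    rw [Metric.mem_ball] at h1 h2
    have := dist_triangle y (c a) x
    have e := dist_comm x (c a)
    linarith
  have hsep : ∀ (x : X) (ε : ℝ), 0 < ε → ∃ p a, x ∈ V p a ∧ V p a ⊆ Metric.ball x ε := by
    intro x ε hε
    obtain ⟨n, hn⟩ : ∃ n : ℕ, 2 * (2:ℝ)⁻¹ ^ n < ε := by
      obtain ⟨n, hn⟩ := exists_pow_lt_of_lt_one (show (0:ℝ) < ε / 2 by linarith)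
        (show (2:ℝ)⁻¹ < 1 by norm_num)
      exact ⟨n, by linarith⟩
    obtain ⟨m, a, hma⟩ := hVcov n x
    refine ⟨(n, m), a, hma, fun y hy => ?_⟩
    rw [Metric.mem_ball]
    exact lt_trans (hVsmall (n, m) a x y hma hy) hn
  -- the map
  let i₀ : I := Classical.arbitrary I
  let f : X → (ℕ × ℕ) → Hedgehog I := fun x p => spineMap (V p) ι i₀ x
  have hcont : Continuous f :=
    continuous_pi (fun p => spineMap_continuous (hVopen p) (hVloc p))
  have key : ∀ (x : X) (U : Set X), IsOpen U → x ∈ U →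
      ∃ (p : ℕ × ℕ) (δ : ℝ), 0 < δ ∧ ∀ y : X, y ∉ U → δ ≤ dist (f x p) (f y p) := by
    intro x U hUo hxU
    obtain ⟨ε, hε, hball⟩ := Metric.isOpen_iff.mp hUo x hxU
    obtain ⟨p, a, hxa, hsub⟩ := hsep x ε hε
    refine ⟨p, bump (V p a) x, bump_pos (hVopen p a) hxa, fun y hy => ?_⟩
    have hynot : y ∉ V p a := fun hyV => hy (hball (hsub hyV))
    exact bump_le_dist_spineMap (hVdj p) ι.injective hxa hynot
  have hinj : Function.Injective f := by
    intro x y hxy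
    by_contra hne
    have hd : 0 < dist x y := dist_pos.mpr hne
    obtain ⟨p, δ, hδ, hkey⟩ := key x (Metric.ball x (dist x y)) Metric.isOpen_ball
      (Metric.mem_ball_self hd)
    have hyn : y ∉ Metric.ball x (dist x y) := by
      rw [Metric.mem_ball, dist_comm]
      exact lt_irrefl _
    have := hkey y hyn
    rw [hxy] at this
    rw [dist_self] at this
    linarith
  refine ⟨f, ?_, hinj⟩
  rw [isInducing_iff_nhds]
  intro x
  refine le_antisymm ((hcont.tendsto x).le_comap) ?_
  intro U hU
  obtain ⟨U', hU'sub, hU'o, hxU'⟩ := _root_.mem_nhds_iff.mp hU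
  obtain ⟨p, δ, hδ, hkey⟩ := key x U' hU'o hxU'
  rw [Filter.mem_comap]
  refine ⟨(fun g : (ℕ × ℕ) → Hedgehog I => g p) ⁻¹' (Metric.ball (f x p) δ), ?_, ?_⟩
  · exact (Metric.isOpen_ball.preimage (continuous_apply p)).mem_nhds
      (by simp [Metric.mem_ball, dist_self, hδ])
  · intro y hy
    simp only [Set.mem_preimage, Metric.mem_ball] at hy
    by_contra hyU
    have hyn : y ∉ U' := fun hyU' => hyU (hU'sub hyU')
    have := hkey y hyn
    rw [dist_comm] at hy
    linarith
end HedgehogAux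
/-! ### The snake: a proper continuous path through the spines -/

namespace HedgehogAux

open Filter Topology

variable {I : Type u}

def oneI : Set.Icc (0:ℝ) 1 := ⟨1, by norm_num⟩

noncomputable def clampI (x : ℝ) : Set.Icc (0:ℝ) 1 :=
  ⟨max 0 (min 1 x), le_max_left _ _, max_le zero_le_one (min_le_left _ _)⟩

/-- triangular wave through the spines indexed by `ℤ` -/
noncomputable def wave (z : ℤ → I) (t : ℝ) : Hedgehog I :=
  ⟦(clampI (1 - |t - 2 * round (t / 2)|), z (round (t / 2)))⟧

lemma round_half_abs (t : ℝ) : |t - 2 * round (t / 2)| ≤ 1 := by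
  have h := abs_sub_round (t / 2)
  rw [abs_le] at h ⊢
  constructor <;> [linarith [h.1]; linarith [h.2]]

lemma clampI_coe {x : ℝ} (h0 : 0 ≤ x) (h1 : x ≤ 1) : ((clampI x : Set.Icc (0:ℝ) 1) : ℝ) = x := by
  show max 0 (min 1 x) = x
  rw [min_eq_right h1, max_eq_right h0]

lemma wave_height (t : ℝ) :
    ((clampI (1 - |t - 2 * round (t / 2)|) : Set.Icc (0:ℝ) 1) : ℝ)
      = 1 - |t - 2 * round (t / 2)| := by
  have h1 := round_half_abs t
  have h0 : (0:ℝ) ≤ |t - 2 * round (t / 2)| := abs_nonneg _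
  exact clampI_coe (by linarith) (by linarith)

lemma wave_le_endpoints (t : ℝ) :
    1 - |t - 2 * round (t / 2)| ≤ (2 * round (t / 2) + 1) - t ∧
    1 - |t - 2 * round (t / 2)| ≤ t - (2 * round (t / 2) - 1) := by
  constructor
  · have := le_abs_self (t - 2 * round (t / 2)); linarith
  · have := neg_abs_le (t - 2 * round (t / 2)); linarith

lemma wave_lipschitz {z : ℤ → I} (hz : Function.Injective z) :
    LipschitzWith 1 (wave z) := by
  apply LipschitzWith.of_dist_le_mul
  have key : ∀ t s : ℝ, dist (wave z t) (wave z s) ≤ dist t s := by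
    -- first handle the case round(t/2) < round(s/2); general case by symmetry
    have main : ∀ t s : ℝ, round (t / 2) < round (s / 2) →
        dist (wave z t) (wave z s) ≤ dist s t := by
      intro t s hlt
      unfold wave
      rw [dist_mk_ne (fun he => absurd (hz he) (ne_of_lt hlt)), wave_height, wave_height]
      have habs : (0:ℝ) ≤ |t - 2 * round (t / 2)| := abs_nonneg _
      have habs' : (0:ℝ) ≤ |s - 2 * round (s / 2)| := abs_nonneg _
      have h1 := (wave_le_endpoints t).1
      have h2 := (wave_le_endpoints s).2
      have hint : (2 * (round (t/2) : ℝ) + 1) ≤ 2 * (round (s/2) : ℝ) - 1 := by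
        have : (round (t/2) : ℝ) + 1 ≤ (round (s/2) : ℝ) := by exact_mod_cast hlt
        linarith
      rw [Real.dist_eq]
      have hts : t ≤ s := by
        have ht := round_half_abs t
        have hs := round_half_abs s
        rw [abs_le] at ht hs
        linarith [ht.1, hs.2]
      rw [abs_of_nonneg (show (0:ℝ) ≤ s - t by linarith)]
      linarith
    intro t s
    rcases lt_trichotomy (round (t/2)) (round (s/2)) with h | h | h
    · rw [dist_comm t s]; exact main t s h
    · unfold wave
      have ht1 : |t - 2 * (round (s/2):ℝ)| ≤ 1 := by
        have := round_half_abs t; rwa [h] at this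
      have hs1 : |s - 2 * (round (s/2):ℝ)| ≤ 1 := round_half_abs s
      have ht0 : (0:ℝ) ≤ |t - 2 * (round (s/2):ℝ)| := abs_nonneg _
      have hs0 : (0:ℝ) ≤ |s - 2 * (round (s/2):ℝ)| := abs_nonneg _
      rw [h, dist_mk_same, clampI_coe (by linarith) (by linarith),
        clampI_coe (by linarith) (by linarith), Real.dist_eq]
      have a1 := abs_abs_sub_abs_le_abs_sub (t - 2 * (round (s/2):ℝ)) (s - 2 * (round (s/2):ℝ))
      have a2 : (t - 2 * (round (s/2):ℝ)) - (s - 2 * (round (s/2):ℝ)) = t - s := by ring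
      rw [a2] at a1
      have a3 : (1 - |t - 2 * (round (s/2):ℝ)|) - (1 - |s - 2 * (round (s/2):ℝ)|)
          = -(|t - 2 * (round (s/2):ℝ)| - |s - 2 * (round (s/2):ℝ)|) := by ring
      rw [a3, abs_neg]
      exact a1
    · rw [dist_comm (wave z t) (wave z s)]
      exact main s t h
  intro t s
  rw [NNReal.coe_one, one_mul]
  exact key t s

lemma wave_tip (z : ℤ → I) (m : ℤ) : wave z (2 * m) = ⟦(oneI, z m)⟧ := by
  unfold wave
  have h : ((2 : ℝ) * m) / 2 = (m : ℝ) := by ring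
  rw [h, round_intCast]
  have hc : clampI (1 - |(2:ℝ) * m - 2 * m|) = oneI := by
    apply Subtype.ext
    show max 0 (min 1 (1 - |(2:ℝ) * m - 2 * m|)) = 1
    rw [show (2:ℝ) * m - 2 * m = 0 by ring]
    norm_num
  rw [hc]

/-- the staircase reparametrisation -/
noncomputable def stair (t : ℝ) : ℝ := 2 * ⌊t / 4⌋ + max 0 (t - 4 * ⌊t / 4⌋ - 2)

lemma stair_mono : Monotone stair := by
  intro t s hts
  unfold stair
  have hf : ⌊t / 4⌋ ≤ ⌊s / 4⌋ := Int.floor_le_floor (by linarith)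
  rcases eq_or_lt_of_le hf with he | hlt
  · rw [← he]
    have hm : max 0 (t - 4 * (⌊t/4⌋:ℤ) - 2) ≤ max 0 (s - 4 * (⌊t/4⌋:ℤ) - 2) :=
      max_le_max (le_refl 0) (by linarith)
    linarith
  · have h1 : max 0 (t - 4 * ⌊t / 4⌋ - 2) ≤ 2 := by
      apply max_le (by norm_num)
      have := Int.lt_floor_add_one (t / 4)
      have h4 : t < 4 * ⌊t / 4⌋ + 4 := by push_cast at this ⊢; linarith
      linarith
    have h2 : (⌊t / 4⌋ : ℝ) + 1 ≤ (⌊s / 4⌋ : ℝ) := by exact_mod_cast hlt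
    have h3 : (0:ℝ) ≤ max 0 (s - 4 * ⌊s / 4⌋ - 2) := le_max_left _ _
    linarith

lemma stair_surj : Function.Surjective stair := by
  intro y
  refine ⟨4 * ⌊y / 2⌋ + 2 + (y - 2 * ⌊y / 2⌋), ?_⟩
  have h1 : (⌊y / 2⌋ : ℝ) ≤ y / 2 := Int.floor_le _
  have h2 : y / 2 < ⌊y / 2⌋ + 1 := Int.lt_floor_add_one _
  unfold stair
  have hfl : ⌊(4 * (⌊y / 2⌋:ℝ) + 2 + (y - 2 * ⌊y / 2⌋)) / 4⌋ = ⌊y / 2⌋ := by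
    rw [Int.floor_eq_iff]
    constructor <;> [linarith; linarith]
  rw [hfl]
  rw [max_eq_right (by linarith)]
  ring

lemma stair_continuous : Continuous stair :=
  stair_mono.continuous_of_denseRange stair_surj.denseRange

lemma stair_eq_left {m : ℤ} {t : ℝ} (h1 : 4 * m ≤ t) (h2 : t ≤ 4 * m + 2) :
    stair t = 2 * m := by
  have hfl : ⌊t / 4⌋ = m := by
    rw [Int.floor_eq_iff]
    constructor <;> [linarith; linarith]
  unfold stair
  rw [hfl, max_eq_left (by push_cast; linarith)]
  push_cast
  ring

/-- the two snake coordinates -/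
noncomputable def snakeA (z : ℤ → I) (t : ℝ) : Hedgehog I := wave z (stair t)
noncomputable def snakeB (z : ℤ → I) (t : ℝ) : Hedgehog I := wave z (stair (t + 2))

lemma snakeA_continuous {z : ℤ → I} (hz : Function.Injective z) : Continuous (snakeA z) :=
  (wave_lipschitz hz).continuous.comp stair_continuous

lemma snakeB_continuous {z : ℤ → I} (hz : Function.Injective z) : Continuous (snakeB z) :=
  (wave_lipschitz hz).continuous.comp (stair_continuous.comp (by continuity))

/-- at every parameter, one of the two coordinates sits at a tip with large index -/
lemma snake_tip (z : ℤ → I) (t : ℝ) :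
    snakeA z t = ⟦(oneI, z ⌊t / 4⌋)⟧ ∨ snakeB z t = ⟦(oneI, z (⌊t / 4⌋ + 1))⟧ := by
  have h1 : 4 * (⌊t / 4⌋:ℝ) ≤ t := by
    have := Int.floor_le (t / 4); linarith
  have h2 : t < 4 * (⌊t / 4⌋:ℝ) + 4 := by
    have := Int.lt_floor_add_one (t / 4); push_cast at this ⊢; linarith
  rcases le_or_gt t (4 * (⌊t / 4⌋:ℝ) + 2) with h | h
  · left
    unfold snakeA
    have e1 : 4 * ((⌊t / 4⌋ : ℤ) : ℝ) ≤ t := by push_cast; linarith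
    have e2 : t ≤ 4 * ((⌊t / 4⌋ : ℤ) : ℝ) + 2 := by push_cast; linarith
    rw [stair_eq_left e1 e2, wave_tip]
  · right
    unfold snakeB
    have e1 : 4 * ((⌊t / 4⌋ + 1 : ℤ) : ℝ) ≤ t + 2 := by push_cast; linarith
    have e2 : t + 2 ≤ 4 * ((⌊t / 4⌋ + 1 : ℤ) : ℝ) + 2 := by push_cast; linarith
    rw [stair_eq_left e1 e2, wave_tip]

end HedgehogAux
namespace HedgehogAux

open Filter Topology

variable {I : Type u}

lemma dist_tip_ge {z : ℤ → I} (hz : Function.Injective z) (p : Hedgehog I) {m : ℤ}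
    (hm : ∀ m', z m' = p.out.2 → m' ≠ m) : (1:ℝ) ≤ dist (⟦(oneI, z m)⟧ : Hedgehog I) p := by
  have hne : z m ≠ p.out.2 := fun he => (hm m he) rfl
  conv_rhs => rw [← Quotient.out_eq p, ← Prod.mk.eta (p := p.out)]
  rw [dist_mk_ne hne]
  have := p.out.1.2.1
  show (1:ℝ) + _ ≥ 1
  linarith

lemma snake_proper {z : ℤ → I} (hz : Function.Injective z) (tk : ℕ → ℝ)
    (htop : Tendsto tk atTop atTop) (p q : Hedgehog I) :
    ¬ Tendsto (fun k => ((snakeA z (tk k), snakeB z (tk k)) : Hedgehog I × Hedgehog I))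
      atTop (𝓝 (p, q)) := by
  intro h
  have hA : Tendsto (fun k => snakeA z (tk k)) atTop (𝓝 p) :=
    (continuous_fst.tendsto _).comp h
  have hB : Tendsto (fun k => snakeB z (tk k)) atTop (𝓝 q) :=
    (continuous_snd.tendsto _).comp h
  have hm : Tendsto (fun k => ⌊tk k / 4⌋) atTop atTop := by
    rw [Filter.tendsto_atTop]
    intro b
    filter_upwards [htop.eventually_ge_atTop (4 * (b:ℝ) + 4)] with k hk
    exact Int.le_floor.mpr (by linarith)
  classical
  set Mp : ℤ := if h : ∃ m', z m' = p.out.2 then h.choose else 0 with hMp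
  set Mq : ℤ := if h : ∃ m', z m' = q.out.2 then h.choose else 0 with hMq
  have hP : ∀ m, Mp < m → (1:ℝ) ≤ dist (⟦(oneI, z m)⟧ : Hedgehog I) p := by
    intro m hlt
    refine dist_tip_ge hz p (fun m' hm' hme => ?_)
    have hex : ∃ a, z a = p.out.2 := ⟨m', hm'⟩
    have hMm : Mp = m' := by
      rw [hMp, dif_pos hex]
      exact hz (hex.choose_spec.trans hm'.symm)
    rw [hMm, hme] at hlt
    exact lt_irrefl m hlt
  have hQ : ∀ m, Mq < m → (1:ℝ) ≤ dist (⟦(oneI, z m)⟧ : Hedgehog I) q := by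
    intro m hlt
    refine dist_tip_ge hz q (fun m' hm' hme => ?_)
    have hex : ∃ a, z a = q.out.2 := ⟨m', hm'⟩
    have hMm : Mq = m' := by
      rw [hMq, dif_pos hex]
      exact hz (hex.choose_spec.trans hm'.symm)
    rw [hMm, hme] at hlt
    exact lt_irrefl m hlt
  have hevA := Metric.tendsto_nhds.mp hA 1 one_pos
  have hevB := Metric.tendsto_nhds.mp hB 1 one_pos
  have hevM := hm.eventually_gt_atTop (max Mp (Mq - 1))
  obtain ⟨k, h1, h2, h3⟩ := (hevA.and (hevB.and hevM)).exists
  rcases snake_tip z (tk k) with ht | ht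
  · rw [ht] at h1
    exact absurd h1 (not_lt.mpr (hP _ (lt_of_le_of_lt (le_max_left _ _) h3)))
  · rw [ht] at h2
    have hlt : Mq < ⌊tk k / 4⌋ + 1 := by
      have := lt_of_le_of_lt (le_max_right Mp (Mq - 1)) h3
      omega
    exact absurd h2 (not_lt.mpr (hQ _ hlt))

end HedgehogAux
/-! ### Making the image closed -/

namespace HedgehogAux

open Metric Topology TopologicalSpace Filter Set

theorem exists_closed_embedding (I : Type u) [Infinite I] (X : Type u) [MetricSpace X]
    [CompleteSpace X] (hw : weight X ≤ #I) :
    ∃ F : X → ((ℕ × ℕ) → Hedgehog I) × ((ℕ ⊕ ℕ) → Hedgehog I),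
      IsEmbedding F ∧ IsClosed (Set.range F) := by
  classical
  obtain ⟨f, hf⟩ := exists_embedding I X hw
  letI mY : MetricSpace ((ℕ × ℕ) → Hedgehog I) := PiCountable.metricSpace
  -- the G_δ sets
  set U : ℕ → Set ((ℕ × ℕ) → Hedgehog I) := fun n =>
    ⋃₀ {W | IsOpen W ∧ EMetric.diam (f ⁻¹' W) ≤ ENNReal.ofReal ((2:ℝ)⁻¹ ^ n)} with hU
  have hUopen : ∀ n, IsOpen (U n) := fun n => isOpen_sUnion (fun W hW => hW.1)
  have hUmem : ∀ n x, f x ∈ U n := by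
    intro n x
    have hb : Metric.ball x ((2:ℝ)⁻¹ ^ n / 3) ∈ 𝓝 x := Metric.ball_mem_nhds x (by positivity)
    rw [isInducing_iff_nhds.mp hf.isInducing x, Filter.mem_comap] at hb
    obtain ⟨S, hS, hSsub⟩ := hb
    obtain ⟨W, hWsub, hWo, hxW⟩ := _root_.mem_nhds_iff.mp hS
    refine Set.mem_sUnion.mpr ⟨W, ⟨hWo, ?_⟩, hxW⟩
    refine EMetric.diam_le (fun p hp q hq => ?_)
    have hp' := hSsub (hWsub hp)
    have hq' := hSsub (hWsub hq)
    rw [Metric.mem_ball] at hp' hq'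
    rw [edist_dist]
    refine ENNReal.ofReal_le_ofReal ?_
    have := dist_triangle p x q
    have e := dist_comm x q
    have hpow : (0:ℝ) < (2:ℝ)⁻¹ ^ n := by positivity
    linarith
  -- escape functions
  set d : ℕ → X → ℝ := fun n x => Metric.infDist (f x) (U n)ᶜ with hd
  let z : ℤ → I := fun m => Infinite.natEmbedding I ((Denumerable.eqv ℤ) m)
  have hz : Function.Injective z :=
    (Infinite.natEmbedding I).injective.comp (Denumerable.eqv ℤ).injective
  have hdpos : ∀ n, (U n)ᶜ.Nonempty → ∀ x, 0 < d n x := by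
    intro n hne x
    refine ((hUopen n).isClosed_compl.notMem_iff_infDist_pos hne).mp ?_
    exact fun hc => hc (hUmem n x)
  have hdcont : ∀ n, Continuous fun x => 1 / d n x := by
    intro n
    rcases Set.eq_empty_or_nonempty ((U n)ᶜ) with he | hne
    · have hdz : (fun x => 1 / d n x) = fun _ => 1 / (0:ℝ) := by
        funext x
        rw [hd]
        simp only [he, Metric.infDist_empty]
      rw [hdz]
      exact continuous_const
    · refine continuous_const.div ?_ (fun x => ne_of_gt (hdpos n hne x))
      exact (Metric.continuous_infDist_pt _).comp hf.continuous
  set g : X → (ℕ ⊕ ℕ) → Hedgehog I := fun x j =>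
    Sum.rec (fun n => snakeA z (1 / d n x)) (fun n => snakeB z (1 / d n x)) j with hg
  have hgcont : Continuous g := by
    refine continuous_pi (fun j => ?_)
    cases j with
    | inl n => exact (snakeA_continuous hz).comp (hdcont n)
    | inr n => exact (snakeB_continuous hz).comp (hdcont n)
  set F : X → ((ℕ × ℕ) → Hedgehog I) × ((ℕ ⊕ ℕ) → Hedgehog I) := fun x => (f x, g x) with hF
  have hFcont : Continuous F := hf.continuous.prodMk hgcont
  have hFemb : IsEmbedding F := by
    constructor
    · rw [isInducing_iff_nhds]
      intro x
      refine le_antisymm ((hFcont.tendsto x).le_comap) ?_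
      calc Filter.comap F (𝓝 (F x))
          ≤ Filter.comap F (Filter.comap Prod.fst (𝓝 (f x))) :=
            Filter.comap_mono ((continuous_fst.tendsto (F x)).le_comap)
        _ = Filter.comap f (𝓝 (f x)) := by rw [Filter.comap_comap]; rfl
        _ = 𝓝 x := (isInducing_iff_nhds.mp hf.isInducing x).symm
    · intro a b hab
      exact hf.injective (congrArg Prod.fst hab)
  refine ⟨F, hFemb, IsSeqClosed.isClosed ?_⟩
  intro u pq hu hlim
  choose xk hxk using hu
  obtain ⟨y, w⟩ := pq
  have hulim : Tendsto (fun k => F (xk k)) atTop (𝓝 (y, w)) := by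
    rw [show (fun k => F (xk k)) = u from funext hxk]
    exact hlim
  have hfy : Tendsto (fun k => f (xk k)) atTop (𝓝 y) := (continuous_fst.tendsto _).comp hulim
  have hgw : ∀ j, Tendsto (fun k => g (xk k) j) atTop (𝓝 (w j)) := fun j =>
    tendsto_pi_nhds.mp ((continuous_snd.tendsto _).comp hulim) j
  -- Step 1: y ∈ U n for all n
  have hyU : ∀ n, y ∈ U n := by
    intro n
    by_contra hyn
    have hylt : ∀ k, d n (xk k) ≤ dist (f (xk k)) y := fun k =>
      Metric.infDist_le_dist_of_mem hyn
    have hd0 : Tendsto (fun k => d n (xk k)) atTop (𝓝 0) :=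
      squeeze_zero (fun k => Metric.infDist_nonneg) hylt
        (tendsto_iff_dist_tendsto_zero.mp hfy)
    have htop : Tendsto (fun k => 1 / d n (xk k)) atTop atTop := by
      simp only [one_div]
      exact tendsto_inv_nhdsGT_zero.comp
        (tendsto_nhdsWithin_iff.mpr ⟨hd0, Filter.Eventually.of_forall
          (fun k => hdpos n ⟨y, hyn⟩ (xk k))⟩)
    exact snake_proper hz _ htop (w (Sum.inl n)) (w (Sum.inr n))
      ((hgw (Sum.inl n)).prodMk_nhds (hgw (Sum.inr n)))
  -- Step 2: the sequence is Cauchy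
  have hcauchy : CauchySeq xk := by
    rw [EMetric.cauchySeq_iff]
    intro ε hε
    obtain ⟨n, hn⟩ : ∃ n : ℕ, ENNReal.ofReal ((2:ℝ)⁻¹ ^ n) < ε := by
      rcases eq_or_ne ε ⊤ with he | he
      · exact ⟨0, he ▸ ENNReal.ofReal_lt_top⟩
      · have hε' : 0 < ε.toReal := ENNReal.toReal_pos (ne_of_gt hε) he
        obtain ⟨n, hn⟩ := exists_pow_lt_of_lt_one hε' (by norm_num : (2:ℝ)⁻¹ < 1)
        refine ⟨n, ?_⟩
        calc ENNReal.ofReal ((2:ℝ)⁻¹ ^ n) < ENNReal.ofReal ε.toReal :=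
              (ENNReal.ofReal_lt_ofReal_iff hε').mpr hn
          _ = ε := ENNReal.ofReal_toReal he
    obtain ⟨W, hW, hyW⟩ := Set.mem_sUnion.mp (hyU n)
    have hev : ∀ᶠ k in atTop, f (xk k) ∈ W := hfy.eventually (hW.1.eventually_mem hyW)
    obtain ⟨N, hN⟩ := Filter.eventually_atTop.mp hev
    refine ⟨N, fun m hm m' hm' => ?_⟩
    exact lt_of_le_of_lt (le_trans
      (EMetric.edist_le_diam_of_mem (hN m hm) (hN m' hm')) hW.2) hn
  obtain ⟨x, hx⟩ := cauchySeq_tendsto_of_complete hcauchy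
  have hyx : y = f x := tendsto_nhds_unique hfy ((hf.continuous.tendsto x).comp hx)
  have hwg : w = g x := by
    funext j
    exact tendsto_nhds_unique (hgw j)
      ((((continuous_apply j).comp hgcont).tendsto x).comp hx)
  exact ⟨x, by rw [hF]; rw [hyx, hwg]⟩

end HedgehogAux
open HedgehogAux in
/-- For `κ ≥ ℵ₀`, every completely metrizable space of weight `κ` embeds as a closed
subspace of the countable Cartesian power `(MJ(κ))^ℕ` of the metric hedgehog. -/
theorem completelyMetrizable_closed_embedding (κ : Cardinal.{u}) (hκ : Cardinal.aleph0 ≤ κ)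
    (I : Type u) (hI : #I = κ) (X : Type u) [TopologicalSpace X]
    (hX : IsCompletelyMetrizable X) (hw : weight X = κ) :
    letI : TopologicalSpace (Hedgehog I) := metricHedgehogTop I
    ∃ f : X → (ℕ → Hedgehog I), IsEmbedding f ∧ IsClosed (Set.range f) := by
  obtain ⟨m, hm, hcomp⟩ := hX
  subst hm
  letI := m
  haveI : CompleteSpace X := hcomp
  haveI : Infinite I := Cardinal.infinite_iff.mpr (hI ▸ hκ)
  have hw' : weight X ≤ #I := by rw [hw, hI]
  obtain ⟨F, hFemb, hFcl⟩ := exists_closed_embedding I X hw'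
  let e : ((ℕ × ℕ) ⊕ (ℕ ⊕ ℕ)) ≃ ℕ := Denumerable.eqv _
  let Ψ : (((ℕ × ℕ) ⊕ (ℕ ⊕ ℕ)) → Hedgehog I) ≃ₜ
      (((ℕ × ℕ) → Hedgehog I) × ((ℕ ⊕ ℕ) → Hedgehog I)) :=
    Homeomorph.sumArrowHomeomorphProdArrow
  let Φ : (((ℕ × ℕ) ⊕ (ℕ ⊕ ℕ)) → Hedgehog I) ≃ₜ (ℕ → Hedgehog I) :=
    Homeomorph.piCongrLeft (Y := fun _ => Hedgehog I) e
  let R := Ψ.symm.trans Φ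
  refine ⟨fun x => R (F x), ?_, ?_⟩
  · exact R.isEmbedding.comp hFemb
  · have hr : Set.range (fun x => R (F x)) = R '' (Set.range F) := by
      rw [← Set.range_comp]
      rfl
    rw [hr]
    exact R.isClosedMap _ hFcl
end

section
/- The real line ℝ with its usual topology embeds as a closed subspace of the square (MJ(ℵ₀))² of the metric hedgehog with countably many spines (with the product topology); i.e., there is a topological embedding h : ℝ → (MJ(ℵ₀))² whose image is closed. -/
open Set Topology Cardinal

universe u v

namespace RealHedgehogEmb

noncomputable section

open Set

local instance : MetricSpace (Hedgehog ℕ) := metricHedgehog ℕ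

lemma dist_mk (t s : Set.Icc (0:ℝ) 1) (i j : ℕ) :
    dist (⟦(t, i)⟧ : Hedgehog ℕ) (⟦(s, j)⟧ : Hedgehog ℕ)
      = if i = j then |(t:ℝ) - s| else (t:ℝ) + s := by
  have hp : ((⟦(t, i)⟧ : Hedgehog ℕ).out.1.1 = 0 ∧ (t:ℝ) = 0) ∨
      (⟦(t, i)⟧ : Hedgehog ℕ).out = (t, i) :=
    Quotient.mk_out (s := hedgehogSetoid ℕ) (t, i)
  have hq : ((⟦(s, j)⟧ : Hedgehog ℕ).out.1.1 = 0 ∧ (s:ℝ) = 0) ∨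
      (⟦(s, j)⟧ : Hedgehog ℕ).out = (s, j) :=
    Quotient.mk_out (s := hedgehogSetoid ℕ) (s, j)
  have ht0 : (0:ℝ) ≤ t := t.2.1
  have hs0 : (0:ℝ) ≤ s := s.2.1
  show hedgehogDist _ _ = _
  unfold hedgehogDist
  rcases hp with ⟨hp1, hp2⟩ | hp
  · rcases hq with ⟨hq1, hq2⟩ | hq
    · split_ifs <;> rw [hp1, hq1, hp2, hq2] <;> simp
    · rw [hq, hp1, hp2]
      split_ifs <;>
        simp [abs_of_nonneg hs0, abs_of_nonpos (by linarith : (0:ℝ) - s ≤ 0)] <;> ring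
  · rcases hq with ⟨hq1, hq2⟩ | hq
    · rw [hp, hq1, hq2]
      split_ifs <;>
        simp [abs_of_nonneg ht0, abs_of_nonpos (by linarith : (0:ℝ) - t ≤ 0)] <;> ring
    · rw [hp, hq]
      by_cases h : i = j <;> simp [h]

def pt (a : ℕ) (t : ℝ) : Hedgehog ℕ := ⟦(Set.projIcc 0 1 zero_le_one t, a)⟧

lemma dist_pt {a b : ℕ} {t s : ℝ} (ht0 : 0 ≤ t) (ht1 : t ≤ 1) (hs0 : 0 ≤ s) (hs1 : s ≤ 1) :
    dist (pt a t) (pt b s) = if a = b then |t - s| else t + s := by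
  rw [pt, pt, dist_mk, Set.projIcc_of_mem _ ⟨ht0, ht1⟩, Set.projIcc_of_mem _ ⟨hs0, hs1⟩]

def cval (x : ℝ) : ℝ := min (min (x - 4*⌊x/4⌋) (4*⌊x/4⌋ + 4 - x)) 1

lemma floor_bounds (x : ℝ) : 4*(⌊x/4⌋:ℝ) ≤ x ∧ x < 4*⌊x/4⌋ + 4 := by
  have h1 := Int.floor_le (x/4)
  have h2 := Int.lt_floor_add_one (x/4)
  constructor <;> push_cast at * <;> linarith

lemma floor_div4_eq {m : ℤ} {x : ℝ} (h1 : 4*(m:ℝ) ≤ x) (h2 : x < 4*m + 4) : ⌊x/4⌋ = m := by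
  rw [Int.floor_eq_iff]
  constructor <;> push_cast <;> [linarith; linarith]

lemma cval_nonneg (x : ℝ) : 0 ≤ cval x := by
  obtain ⟨h1, h2⟩ := floor_bounds x
  exact le_min (le_min (by linarith) (by linarith)) one_pos.le

lemma cval_le_one (x : ℝ) : cval x ≤ 1 := min_le_right _ _

lemma cval_eq {m : ℤ} {x : ℝ} (h1 : 4*(m:ℝ) ≤ x) (h2 : x < 4*m + 4) :
    cval x = min (min (x - 4*m) (4*m + 4 - x)) 1 := by
  rw [cval, floor_div4_eq h1 h2]

lemma cval_of_left {m : ℤ} {z : ℝ} (h1 : 4*(m:ℝ) ≤ z) (h2 : z ≤ 4*m + 1) :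
    cval z = z - 4*m := by
  rw [cval_eq h1 (by linarith),
    show min (z - 4*(m:ℝ)) (4*m + 4 - z) = z - 4*m from min_eq_left (by linarith)]
  exact min_eq_left (by linarith)

lemma cval_of_mid {m : ℤ} {z : ℝ} (h1 : 4*(m:ℝ) + 1 ≤ z) (h2 : z ≤ 4*m + 3) :
    cval z = 1 := by
  rw [cval_eq (by linarith) (by linarith), min_eq_right]
  exact le_min (by linarith) (by linarith)

lemma cval_of_right {m : ℤ} {z : ℝ} (h1 : 4*(m:ℝ) + 3 ≤ z) (h2 : z < 4*m + 4) :
    cval z = 4*m + 4 - z := by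
  rw [cval_eq (by linarith) h2,
    show min (z - 4*(m:ℝ)) (4*m + 4 - z) = 4*m + 4 - z from min_eq_right (by linarith)]
  exact min_eq_left (by linarith)

def zig (f : ℤ → ℕ) (x : ℝ) : Hedgehog ℕ := pt (f ⌊x/4⌋) (cval x)

lemma dist_zig {f : ℤ → ℕ} (hf : Function.Injective f) (x y : ℝ) :
    dist (zig f x) (zig f y) =
      if ⌊x/4⌋ = ⌊y/4⌋ then |cval x - cval y| else cval x + cval y := by
  rw [zig, zig, dist_pt (cval_nonneg x) (cval_le_one x) (cval_nonneg y) (cval_le_one y)]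
  simp [hf.eq_iff]

def A : ℤ → ℕ := fun m => 2 * Encodable.encode m

def B : ℤ → ℕ := fun m => 2 * Encodable.encode m + 1

lemma A_inj : Function.Injective A := fun a b h => by
  have : Encodable.encode a = Encodable.encode b := by simpa [A] using h
  exact Encodable.encode_injective this

lemma B_inj : Function.Injective B := fun a b h => by
  have : Encodable.encode a = Encodable.encode b := by simpa [B] using h
  exact Encodable.encode_injective this

def emb (x : ℝ) : Hedgehog ℕ × Hedgehog ℕ := (zig A x, zig B (x - 2))

lemma dist_zig_le {f : ℤ → ℕ} (hf : Function.Injective f) {x y : ℝ} (hxy : x ≤ y) :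
    dist (zig f x) (zig f y) ≤ y - x := by
  rw [dist_zig hf]
  obtain ⟨hx1, hx2⟩ := floor_bounds x
  obtain ⟨hy1, hy2⟩ := floor_bounds y
  by_cases h : ⌊x/4⌋ = ⌊y/4⌋
  · rw [if_pos h]
    rw [cval, cval, h]
    refine (abs_min_sub_min_le_max _ _ _ _).trans (max_le ?_ (by simp; linarith))
    refine (abs_min_sub_min_le_max _ _ _ _).trans (max_le ?_ ?_)
    · have e : (x - 4*(⌊y/4⌋:ℝ)) - (y - 4*(⌊y/4⌋:ℝ)) = x - y := by ring
      rw [e, abs_sub_comm, abs_of_nonneg (by linarith)]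
    · have e : (4*(⌊y/4⌋:ℝ) + 4 - x) - (4*(⌊y/4⌋:ℝ) + 4 - y) = y - x := by ring
      rw [e, abs_of_nonneg (by linarith)]
  · rw [if_neg h]
    have hmm : ⌊x/4⌋ < ⌊y/4⌋ :=
      lt_of_le_of_ne (Int.floor_le_floor (by linarith)) h
    have hmm' : (⌊x/4⌋:ℝ) + 1 ≤ (⌊y/4⌋:ℝ) := by exact_mod_cast Int.add_one_le_iff.mpr hmm
    have hcx : cval x ≤ 4*(⌊x/4⌋:ℝ) + 4 - x := (min_le_left _ _).trans (min_le_right _ _)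
    have hcy : cval y ≤ y - 4*(⌊y/4⌋:ℝ) := (min_le_left _ _).trans (min_le_left _ _)
    linarith

lemma dist_emb_le_of_le {x y : ℝ} (hxy : x ≤ y) : dist (emb x) (emb y) ≤ y - x := by
  rw [show dist (emb x) (emb y)
      = max (dist (zig A x) (zig A y)) (dist (zig B (x-2)) (zig B (y-2))) from Prod.dist_eq]
  have h2 : dist (zig B (x-2)) (zig B (y-2)) ≤ (y-2) - (x-2) := dist_zig_le B_inj (by linarith)
  exact max_le (dist_zig_le A_inj hxy) (by linarith)

lemma dist_emb_le (x y : ℝ) : dist (emb x) (emb y) ≤ dist x y := by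
  rcases le_total x y with h | h
  · rw [Real.dist_eq, abs_of_nonpos (by linarith)]
    have := dist_emb_le_of_le h; linarith
  · rw [dist_comm, Real.dist_eq, abs_of_nonneg (by linarith)]
    have := dist_emb_le_of_le h; linarith

lemma g_left {m : ℤ} {z : ℝ} (h1 : 4*(m:ℝ) ≤ z) (h2 : z < 4*m + 2) :
    cval z - cval (z - 2) = z - (4*m + 1) := by
  rcases le_total z (4*m + 1) with h | h
  · rw [cval_of_left h1 h, cval_of_mid (m := m - 1) (by push_cast; linarith) (by push_cast; linarith)]
    ring
  · rw [cval_of_mid (m := m) h (by linarith),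
      cval_of_right (m := m - 1) (by push_cast; linarith) (by push_cast; linarith)]
    push_cast; ring

lemma g_right {m : ℤ} {z : ℝ} (h1 : 4*(m:ℝ) + 2 ≤ z) (h2 : z < 4*m + 4) :
    cval (z - 2) - cval z = z - (4*m + 3) := by
  rcases le_total z (4*m + 3) with h | h
  · rw [cval_of_mid (m := m) (by linarith) h, cval_of_left (m := m) (by linarith) (by linarith)]
    ring
  · rw [cval_of_right (m := m) h h2, cval_of_mid (m := m) (by linarith) (by linarith)]
    ring

lemma one_le_sum (z : ℝ) : 1 ≤ cval z + cval (z - 2) := by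
  obtain ⟨h1, h2⟩ := floor_bounds z
  set m := ⌊z/4⌋ with hm
  have c1 := cval_nonneg z
  have c2 := cval_nonneg (z - 2)
  rcases le_total z (4*(m:ℝ) + 1) with h | h
  · rw [cval_of_mid (m := m - 1) (z := z - 2) (by push_cast; linarith) (by push_cast; linarith)]
    linarith
  · rcases le_total z (4*(m:ℝ) + 3) with h' | h'
    · rw [cval_of_mid (m := m) h h']; linarith
    · rw [cval_of_mid (m := m) (z := z - 2) (by linarith) (by linarith)]; linarith

lemma key_le {x y : ℝ} (hxy : x ≤ y) : min (y - x) 1 ≤ 2 * dist (emb x) (emb y) := by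
  have hAd := dist_zig A_inj x y
  have hBd := dist_zig B_inj (x - 2) (y - 2)
  rw [show dist (emb x) (emb y)
      = max (dist (zig A x) (zig A y)) (dist (zig B (x-2)) (zig B (y-2))) from Prod.dist_eq]
  set d1 := dist (zig A x) (zig A y) with hd1
  set d2 := dist (zig B (x-2)) (zig B (y-2)) with hd2
  have hd1n : 0 ≤ d1 := dist_nonneg
  have hd2n : 0 ≤ d2 := dist_nonneg
  have hle1 : d1 ≤ max d1 d2 := le_max_left _ _
  have hle2 : d2 ≤ max d1 d2 := le_max_right _ _
  have hmin1 : min (y - x) 1 ≤ 1 := min_le_right _ _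
  have hmin2 : min (y - x) 1 ≤ y - x := min_le_left _ _
  obtain ⟨hx1, hx2⟩ := floor_bounds x
  obtain ⟨hy1, hy2⟩ := floor_bounds y
  obtain ⟨hx1', hx2'⟩ := floor_bounds (x - 2)
  obtain ⟨hy1', hy2'⟩ := floor_bounds (y - 2)
  by_cases hm : ⌊x/4⌋ = ⌊y/4⌋
  · rw [if_pos hm] at hAd
    rw [← hm] at hy1 hy2
    by_cases hn : ⌊(x-2)/4⌋ = ⌊(y-2)/4⌋
    · -- Case A : both floor pairs agree
      rw [if_pos hn] at hBd
      have h1 := le_abs_self (cval x - cval y)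
      have h1' := neg_abs_le (cval x - cval y)
      have h2 := le_abs_self (cval (x-2) - cval (y-2))
      have h2' := neg_abs_le (cval (x-2) - cval (y-2))
      rcases lt_or_ge x (4*(⌊x/4⌋:ℝ) + 2) with hx | hx
      · have hyy : y < 4*(⌊x/4⌋:ℝ) + 2 := by
          by_contra hc
          push_neg at hc
          have e1 : ⌊(x-2)/4⌋ = ⌊x/4⌋ - 1 :=
            floor_div4_eq (by push_cast; linarith) (by push_cast; linarith)
          have e2 : ⌊(y-2)/4⌋ = ⌊x/4⌋ :=
            floor_div4_eq (by push_cast; linarith) (by push_cast; linarith)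
          rw [e1, e2] at hn; omega
        have gx := g_left (m := ⌊x/4⌋) hx1 hx
        have gy := g_left (m := ⌊x/4⌋) hy1 hyy
        linarith
      · have hxx : 4*(⌊x/4⌋:ℝ) + 2 ≤ y := by linarith
        have gx := g_right (m := ⌊x/4⌋) hx hx2
        have gy := g_right (m := ⌊x/4⌋) hxx hy2
        linarith
    · -- Case B1 : second-coordinate floors differ
      rw [if_neg hn] at hBd
      have hxlt : x < 4*(⌊x/4⌋:ℝ) + 2 := by
        by_contra hc
        push_neg at hc
        have e1 : ⌊(x-2)/4⌋ = ⌊x/4⌋ :=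
          floor_div4_eq (by push_cast; linarith) (by push_cast; linarith)
        have e2 : ⌊(y-2)/4⌋ = ⌊x/4⌋ :=
          floor_div4_eq (by push_cast; linarith) (by push_cast; linarith)
        rw [e1, e2] at hn; omega
      have hyge : 4*(⌊x/4⌋:ℝ) + 2 ≤ y := by
        by_contra hc
        push_neg at hc
        have e1 : ⌊(x-2)/4⌋ = ⌊x/4⌋ - 1 :=
          floor_div4_eq (by push_cast; linarith) (by push_cast; linarith)
        have e2 : ⌊(y-2)/4⌋ = ⌊x/4⌋ - 1 :=
          floor_div4_eq (by push_cast; linarith) (by push_cast; linarith)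
        rw [e1, e2] at hn; omega
      rcases le_total x (4*(⌊x/4⌋:ℝ) + 1) with h | h
      · have e : cval (x - 2) = 1 :=
          cval_of_mid (m := ⌊x/4⌋ - 1) (by push_cast; linarith) (by push_cast; linarith)
        have := cval_nonneg (y - 2)
        linarith
      · rcases le_total (4*(⌊x/4⌋:ℝ) + 3) y with h' | h'
        · have e : cval (y - 2) = 1 :=
            cval_of_mid (m := ⌊x/4⌋) (by linarith) (by linarith)
          have := cval_nonneg (x - 2)
          linarith
        · have ex : cval (x - 2) = 4*(⌊x/4⌋:ℝ) + 2 - x := by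
            rw [cval_of_right (m := ⌊x/4⌋ - 1) (by push_cast; linarith) (by push_cast; linarith)]
            push_cast; ring
          have ey : cval (y - 2) = y - (4*(⌊x/4⌋:ℝ) + 2) := by
            rw [cval_of_left (m := ⌊x/4⌋) (by linarith) (by linarith)]
            ring
          linarith
  · rw [if_neg hm] at hAd
    by_cases hn : ⌊(x-2)/4⌋ = ⌊(y-2)/4⌋
    · -- Case B2 : first-coordinate floors differ
      rw [← hn] at hy1' hy2'
      have hxlt : x < 4*(⌊(x-2)/4⌋:ℝ) + 4 := by
        by_contra hc
        push_neg at hc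
        have e1 : ⌊x/4⌋ = ⌊(x-2)/4⌋ + 1 :=
          floor_div4_eq (by push_cast; linarith) (by push_cast; linarith)
        have e2 : ⌊y/4⌋ = ⌊(x-2)/4⌋ + 1 :=
          floor_div4_eq (by push_cast; linarith) (by push_cast; linarith)
        rw [e1, e2] at hm; omega
      have hyge : 4*(⌊(x-2)/4⌋:ℝ) + 4 ≤ y := by
        by_contra hc
        push_neg at hc
        have e1 : ⌊x/4⌋ = ⌊(x-2)/4⌋ :=
          floor_div4_eq (by push_cast; linarith) (by push_cast; linarith)
        have e2 : ⌊y/4⌋ = ⌊(x-2)/4⌋ :=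
          floor_div4_eq (by push_cast; linarith) (by push_cast; linarith)
        rw [e1, e2] at hm; omega
      rcases le_total x (4*(⌊(x-2)/4⌋:ℝ) + 3) with h | h
      · have e : cval x = 1 := cval_of_mid (m := ⌊(x-2)/4⌋) (by linarith) h
        have := cval_nonneg y
        linarith
      · rcases le_total (4*(⌊(x-2)/4⌋:ℝ) + 5) y with h' | h'
        · have e : cval y = 1 :=
            cval_of_mid (m := ⌊(x-2)/4⌋ + 1) (by push_cast; linarith) (by push_cast; linarith)
          have := cval_nonneg x
          linarith
        · have ex : cval x = 4*(⌊(x-2)/4⌋:ℝ) + 4 - x :=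
            cval_of_right (m := ⌊(x-2)/4⌋) h hxlt
          have ey : cval y = y - (4*(⌊(x-2)/4⌋:ℝ) + 4) := by
            rw [cval_of_left (m := ⌊(x-2)/4⌋ + 1) (by push_cast; linarith)
              (by push_cast; linarith)]
            push_cast; ring
          linarith
    · -- Case C : both floor pairs differ
      rw [if_neg hn] at hBd
      have s1 := one_le_sum x
      have s2 := one_le_sum y
      linarith

lemma key (x y : ℝ) : min (dist x y) 1 ≤ 2 * dist (emb x) (emb y) := by
  rcases le_total x y with h | h
  · rw [Real.dist_eq, abs_of_nonpos (by linarith), neg_sub]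
    exact key_le h
  · rw [Real.dist_eq, abs_of_nonneg (by linarith), dist_comm (emb x)]
    exact key_le h

lemma emb_isUniformEmbedding : IsUniformEmbedding emb := by
  rw [Metric.isUniformEmbedding_iff']
  constructor
  · intro ε hε
    exact ⟨ε, hε, fun {a b} h => lt_of_le_of_lt (dist_emb_le a b) h⟩
  · intro δ hδ
    refine ⟨min δ 1 / 2, by positivity, fun {a b} h => ?_⟩
    have hk := key a b
    have h2 : min (dist a b) 1 < min δ 1 := by linarith
    rcases le_total (dist a b) 1 with h3 | h3
    · rw [min_eq_left h3] at h2
      exact lt_of_lt_of_le h2 (min_le_left _ _)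
    · rw [min_eq_right h3] at h2
      have := min_le_right δ 1
      linarith

lemma final :
    @IsEmbedding ℝ (Hedgehog ℕ × Hedgehog ℕ) _
      (@instTopologicalSpaceProd _ _ (metricHedgehogTop ℕ) (metricHedgehogTop ℕ)) emb ∧
    @IsClosed (Hedgehog ℕ × Hedgehog ℕ)
      (@instTopologicalSpaceProd _ _ (metricHedgehogTop ℕ) (metricHedgehogTop ℕ))
      (Set.range emb) := by
  have hT2 : metricHedgehogTop ℕ
      = (UniformSpace.toTopologicalSpace : TopologicalSpace (Hedgehog ℕ)) := rfl
  have hT : @instTopologicalSpaceProd (Hedgehog ℕ) (Hedgehog ℕ)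
      (metricHedgehogTop ℕ) (metricHedgehogTop ℕ)
      = (UniformSpace.toTopologicalSpace : TopologicalSpace (Hedgehog ℕ × Hedgehog ℕ)) := rfl
  haveI hT0 : @T0Space (Hedgehog ℕ × Hedgehog ℕ) UniformSpace.toTopologicalSpace := by
    rw [← hT, hT2]
    infer_instance
  have hce := @IsUniformEmbedding.isClosedEmbedding ℝ (Hedgehog ℕ × Hedgehog ℕ)
    _ _ _ hT0 _ emb_isUniformEmbedding
  obtain ⟨h1, h2⟩ := hce
  rw [hT]
  exact ⟨h1, h2⟩

end

end RealHedgehogEmb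

/-- The real line embeds as a closed subspace of the square `(MJ(ℵ₀))²` of the metric
hedgehog with countably many spines. -/
theorem real_closed_embedding_hedgehog_sq :
    letI : TopologicalSpace (Hedgehog ℕ) := metricHedgehogTop ℕ
    ∃ h : ℝ → Hedgehog ℕ × Hedgehog ℕ, IsEmbedding h ∧ IsClosed (Set.range h) := by
  exact ⟨RealHedgehogEmb.emb, RealHedgehogEmb.final.1, RealHedgehogEmb.final.2⟩
end

section
/- Every metrizable topological space has a σ-discrete basis, i.e., a basis of its topology that can be written as a countable union of discrete families of open sets. -/
open Set Topology Cardinal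

universe u v

open EMetric ENNReal in
/-- Every open cover of a pseudo-emetric space has a σ-discrete open refinement.
Adapted from the Mary Ellen Rudin proof of paracompactness of metric spaces in Mathlib. -/
lemma exists_sigma_discrete_refinement {α : Type*} [PseudoEMetricSpace α] {ι : Type*}
    (s : ι → Set α) (ho : ∀ i, IsOpen (s i)) (hcov : ∀ x, ∃ i, x ∈ s i) :
    ∃ D : ℕ → ι → Set α, (∀ n i, IsOpen (D n i)) ∧ (∀ x, ∃ n i, x ∈ D n i) ∧
      (∀ n i, D n i ⊆ s i) ∧ ∀ n, IsDiscreteFamily (D n) := by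
  have pow_pos : ∀ k : ℕ, (0 : ℝ≥0∞) < 2⁻¹ ^ k := fun k =>
    ENNReal.pow_pos (ENNReal.inv_pos.2 ENNReal.ofNat_ne_top) _
  have hpow_le : ∀ {m n : ℕ}, m ≤ n → (2⁻¹ : ℝ≥0∞) ^ n ≤ 2⁻¹ ^ m := @fun m n h =>
    pow_le_pow_right_of_le_one' (ENNReal.inv_le_one.2 ENNReal.one_lt_two.le) h
  have h2pow : ∀ n : ℕ, 2 * (2⁻¹ : ℝ≥0∞) ^ (n + 1) = 2⁻¹ ^ n := fun n => by
    simp [pow_succ', ← mul_assoc, ENNReal.mul_inv_cancel two_ne_zero ENNReal.ofNat_ne_top]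
  -- choose a well founded order on `ι`
  obtain ⟨_, wf⟩ := exists_wellOrder ι
  -- Let `ind x` be the minimal index `i` such that `x ∈ s i`.
  set ind : α → ι := fun x => wellFounded_lt.min { i : ι | x ∈ s i } (hcov x)
  have mem_ind : ∀ x, x ∈ s (ind x) := fun x => wellFounded_lt.min_mem _ (hcov x)
  have nmem_of_lt_ind : ∀ {x i}, i < ind x → x ∉ s i := @fun x i hlt hxi =>
    wellFounded_lt.not_lt_min {i : ι | x ∈ s i} hxi hlt
  set D : ℕ → ι → Set α := fun n =>
    Nat.strongRec (motive := fun _ => ι → Set α) (fun n D' i =>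
      ⋃ (x : α) (_ : ind x = i) (_ : ball x (3 * 2⁻¹ ^ n) ⊆ s i) (_ :
        ∀ (m : ℕ) (H : m < n), ∀ (j : ι), x ∉ D' m H j), ball x (2⁻¹ ^ n)) n with hD
  have Dn : ∀ n i, D n i = ⋃ (x : α) (_ : ind x = i) (_ : ball x (3 * 2⁻¹ ^ n) ⊆ s i)
      (_ : ∀ m < n, ∀ (j : ι), x ∉ D m j), ball x (2⁻¹ ^ n) := fun n s => by
    simp only [hD]
    rw [Nat.strongRec_eq]
  have memD : ∀ {n i y},
      y ∈ D n i ↔ ∃ x : α, ind x = i ∧ ball x (3 * 2⁻¹ ^ n) ⊆ s i ∧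
        (∀ m < n, ∀ (j : ι), x ∉ D m j) ∧ edist y x < 2⁻¹ ^ n := by
    intro n i y
    rw [Dn n i]
    simp only [mem_iUnion, Metric.mem_eball, exists_prop]
    exact Iff.rfl
  have Dcov : ∀ x, ∃ n i, x ∈ D n i := fun x => by
    obtain ⟨n, hn⟩ : ∃ n : ℕ, ball x (3 * 2⁻¹ ^ n) ⊆ s (ind x) := by
      rcases isOpen_iff.1 (ho <| ind x) x (mem_ind x) with ⟨ε, ε0, hε⟩
      have : 0 < ε / 3 := ENNReal.div_pos_iff.2 ⟨ε0.lt.ne', ENNReal.coe_ne_top⟩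
      rcases ENNReal.exists_inv_two_pow_lt this.ne' with ⟨n, hn⟩
      refine ⟨n, Subset.trans (ball_subset_ball ?_) hε⟩
      simpa only [div_eq_mul_inv, mul_comm] using (ENNReal.mul_lt_of_lt_div hn).le
    by_contra! h
    apply h n (ind x)
    exact memD.2 ⟨x, rfl, hn, fun _ _ _ => h _ _, mem_ball_self (pow_pos _)⟩
  have Dopen : ∀ n i, IsOpen (D n i) := fun n i => by
    rw [Dn]
    iterate 4 refine isOpen_iUnion fun _ => ?_
    exact isOpen_ball
  have HDS : ∀ n i, D n i ⊆ s i := fun n i x => by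
    rw [memD]
    rintro ⟨y, rfl, hsub, -, hyx⟩
    refine hsub (hyx.trans_le <| le_mul_of_one_le_left' ?_)
    norm_num1
  refine ⟨D, Dopen, Dcov, HDS, fun m x => ?_⟩
  rcases Dcov x with ⟨n, i, hn⟩
  have : D n i ∈ 𝓝 x := IsOpen.mem_nhds (Dopen _ _) hn
  rcases (nhds_basis_uniformity uniformity_basis_edist_inv_two_pow).mem_iff.1 this with
    ⟨k, -, hsub : ball x (2⁻¹ ^ k) ⊆ D n i⟩
  set B := ball x (2⁻¹ ^ (n + k + 1))
  refine ⟨B, ball_mem_nhds _ (pow_pos _), ?_⟩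
  have Hgt : ∀ m ≥ n + k + 1, ∀ (i : ι), Disjoint (D m i) B := fun m hm i => by
    rw [disjoint_iff_inf_le]
    rintro y ⟨hym, hyx⟩
    rcases memD.1 hym with ⟨z, rfl, _hzi, H, hz⟩
    have : z ∉ ball x (2⁻¹ ^ k) := fun hz' => H n (by omega) i (hsub hz')
    apply this
    calc
      edist z x ≤ edist y z + edist y x := edist_triangle_left _ _ _
      _ < 2⁻¹ ^ m + 2⁻¹ ^ (n + k + 1) := ENNReal.add_lt_add hz hyx
      _ ≤ 2⁻¹ ^ (k + 1) + 2⁻¹ ^ (k + 1) :=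
        (add_le_add (hpow_le <| by omega) (hpow_le <| by omega))
      _ = 2⁻¹ ^ k := by rw [← two_mul, h2pow]
  have Hle : ∀ m ≤ n + k, Set.Subsingleton { j | (D m j ∩ B).Nonempty } := by
    rintro m hm j₁ ⟨y, hyD, hyB⟩ j₂ ⟨z, hzD, hzB⟩
    by_contra! h' : j₁ ≠ j₂
    wlog h : j₁ < j₂ generalizing j₁ j₂ y z
    · exact this z hzD hzB y hyD hyB h'.symm (h'.lt_or_gt.resolve_left h)
    rcases memD.1 hyD with ⟨y', rfl, hsuby, -, hdisty⟩
    rcases memD.1 hzD with ⟨z', rfl, -, -, hdistz⟩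
    suffices edist z' y' < 3 * 2⁻¹ ^ m from nmem_of_lt_ind h (hsuby this)
    calc
      edist z' y' ≤ edist z' x + edist x y' := edist_triangle _ _ _
      _ ≤ edist z z' + edist z x + (edist y x + edist y y') :=
        (add_le_add (edist_triangle_left _ _ _) (edist_triangle_left _ _ _))
      _ < 2⁻¹ ^ m + 2⁻¹ ^ (n + k + 1) + (2⁻¹ ^ (n + k + 1) + 2⁻¹ ^ m) := by
        apply_rules [ENNReal.add_lt_add]
      _ = 2 * (2⁻¹ ^ m + 2⁻¹ ^ (n + k + 1)) := by simp only [two_mul, add_comm]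
      _ ≤ 2 * (2⁻¹ ^ m + 2⁻¹ ^ (m + 1)) := by
        gcongr 2 * (_ + ?_); exact hpow_le (add_le_add hm le_rfl)
      _ = 3 * 2⁻¹ ^ m := by
        rw [mul_add, h2pow, ← two_add_one_eq_three, add_mul, one_mul]
  rcases le_or_gt m (n + k) with hm | hm
  · exact Hle m hm
  · intro j₁ hj₁ j₂ _
    exact absurd ((Hgt m hm j₁).inter_eq ▸ hj₁ : (∅ : Set α).Nonempty) (by simp)

/-- Every metrizable space has a σ-discrete basis. -/
theorem exists_sigma_discrete_basis (X : Type*) [TopologicalSpace X]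
    [TopologicalSpace.MetrizableSpace X] :
    ∃ B : ℕ → Set (Set X),
      TopologicalSpace.IsTopologicalBasis (⋃ n, B n) ∧
      (∀ n, ∀ W ∈ B n, IsOpen W) ∧
      (∀ n, IsDiscreteSetFamily (B n)) := by
  obtain ⟨m, hm⟩ : ∃ m : MetricSpace X, m.toUniformSpace.toTopologicalSpace = ‹TopologicalSpace X› :=
    ⟨TopologicalSpace.metrizableSpaceMetric X, rfl⟩
  subst hm
  -- For each scale `N`, refine the cover by balls of radius `2⁻¹ ^ N`.
  have key : ∀ N : ℕ, ∃ D : ℕ → X → Set X, (∀ n i, IsOpen (D n i)) ∧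
      (∀ x, ∃ n i, x ∈ D n i) ∧ (∀ n i, D n i ⊆ EMetric.ball i ((2:ENNReal)⁻¹ ^ N)) ∧
      ∀ n, IsDiscreteFamily (D n) := fun N =>
    exists_sigma_discrete_refinement (fun y => EMetric.ball y ((2:ENNReal)⁻¹ ^ N))
      (fun _ => EMetric.isOpen_ball)
      (fun x => ⟨x, EMetric.mem_ball_self (ENNReal.pow_pos (by simp) _)⟩)
  choose D Dopen Dcov Dsub Ddisc using key
  -- Pair up the two natural indices.
  let e : ℕ ≃ ℕ × ℕ := (Denumerable.eqv (ℕ × ℕ)).symm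
  refine ⟨fun k => Set.range (D (e k).1 (e k).2), ?_, ?_, ?_⟩
  · refine TopologicalSpace.isTopologicalBasis_of_isOpen_of_nhds ?_ ?_
    · rintro W hW
      simp only [mem_iUnion, Set.mem_range] at hW
      obtain ⟨k, i, rfl⟩ := hW
      exact Dopen _ _ _
    · intro x U hxU hU
      rcases EMetric.isOpen_iff.1 hU x hxU with ⟨ε, ε0, hε⟩
      obtain ⟨N, hN⟩ : ∃ N : ℕ, (2:ENNReal)⁻¹ ^ N < ε / 2 :=
        ENNReal.exists_inv_two_pow_lt (ENNReal.div_pos ε0.ne' ENNReal.ofNat_ne_top).ne'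
      obtain ⟨n, y, hxD⟩ := Dcov N x
      refine ⟨D N n y, ?_, hxD, ?_⟩
      · exact mem_iUnion.2 ⟨e.symm (N, n), by simp [e]⟩
      · intro z hz
        apply hε
        have hzy : edist z y < (2:ENNReal)⁻¹ ^ N := EMetric.mem_ball.1 (Dsub N n y hz)
        have hxy : edist x y < (2:ENNReal)⁻¹ ^ N := EMetric.mem_ball.1 (Dsub N n y hxD)
        have : edist z x < 2 * ((2:ENNReal)⁻¹ ^ N) := by
          calc edist z x ≤ edist z y + edist x y := edist_triangle_right _ _ _
            _ < (2:ENNReal)⁻¹ ^ N + (2:ENNReal)⁻¹ ^ N := ENNReal.add_lt_add hzy hxy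
            _ = 2 * ((2:ENNReal)⁻¹ ^ N) := (two_mul _).symm
        refine EMetric.mem_ball.2 (this.trans_le ?_)
        calc 2 * ((2:ENNReal)⁻¹ ^ N) ≤ 2 * (ε / 2) := by gcongr
          _ ≤ ε := ENNReal.mul_div_le
  · rintro k W hW
    obtain ⟨i, rfl⟩ := hW
    exact Dopen _ _ _
  · intro k x
    obtain ⟨N, hN, hsub⟩ := Ddisc (e k).1 (e k).2 x
    refine ⟨N, hN, ?_⟩
    rintro A ⟨⟨i₁, rfl⟩, h₁⟩ A' ⟨⟨i₂, rfl⟩, h₂⟩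
    rw [hsub h₁ h₂]
end

section
/- The quotient hedgehog J(κ) is first countable if and only if κ < ℵ₀. -/
open Set Topology Cardinal

universe u v

namespace QHAux

variable {I : Type u}

/-- Sets of the form `{p | p.1 < c p.2}` are open in the base topology. -/
lemma isOpen_slices (c : I → ℝ) :
    IsOpen[hedgehogBaseTop I] {p : Set.Icc (0:ℝ) 1 × I | (p.1 : ℝ) < c p.2} := by
  letI : TopologicalSpace I := ⊥
  haveI : DiscreteTopology I := ⟨rfl⟩
  show IsOpen {p : Set.Icc (0:ℝ) 1 × I | (p.1 : ℝ) < c p.2}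
  have h : {p : Set.Icc (0:ℝ) 1 × I | (p.1 : ℝ) < c p.2}
      = ⋃ i : I, (Subtype.val ⁻¹' Set.Iio (c i)) ×ˢ ({i} : Set I) := by
    ext p
    simp only [Set.mem_setOf_eq, Set.mem_iUnion, Set.mem_prod, Set.mem_preimage,
      Set.mem_Iio, Set.mem_singleton_iff]
    constructor
    · intro hp; exact ⟨p.2, hp, rfl⟩
    · rintro ⟨i, hi, rfl⟩; exact hi
  rw [h]
  exact isOpen_iUnion fun i =>
    (isOpen_Iio.preimage continuous_subtype_val).prod (isOpen_discrete _)

/-- Spine pieces `{p | p.2 = i ∧ |p.1 - t| < m}` are open in the base topology. -/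
lemma isOpen_spine (i : I) (t m : ℝ) :
    IsOpen[hedgehogBaseTop I]
      {p : Set.Icc (0:ℝ) 1 × I | p.2 = i ∧ |(p.1 : ℝ) - t| < m} := by
  letI : TopologicalSpace I := ⊥
  haveI : DiscreteTopology I := ⟨rfl⟩
  show IsOpen {p : Set.Icc (0:ℝ) 1 × I | p.2 = i ∧ |(p.1 : ℝ) - t| < m}
  have h : {p : Set.Icc (0:ℝ) 1 × I | p.2 = i ∧ |(p.1 : ℝ) - t| < m}
      = (Subtype.val ⁻¹' Metric.ball t m) ×ˢ ({i} : Set I) := by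
    ext p
    simp only [Set.mem_setOf_eq, Set.mem_prod, Set.mem_preimage, Metric.mem_ball,
      Set.mem_singleton_iff, Real.dist_eq]
    tauto
  rw [h]
  exact (Metric.isOpen_ball.preimage continuous_subtype_val).prod (isOpen_discrete _)

/-- Images of saturated open sets are open in the quotient topology. -/
lemma isOpen_image_of_saturated (V : Set (Set.Icc (0:ℝ) 1 × I))
    (hV : IsOpen[hedgehogBaseTop I] V)
    (hsat : ∀ p ∈ V, (p.1 : ℝ) = 0 → ∀ p' : Set.Icc (0:ℝ) 1 × I, (p'.1 : ℝ) = 0 → p' ∈ V) :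
    IsOpen[quotHedgehogTop I] (Quotient.mk (hedgehogSetoid I) '' V) := by
  rw [quotHedgehogTop, isOpen_coinduced]
  have h : Quotient.mk (hedgehogSetoid I) ⁻¹' (Quotient.mk (hedgehogSetoid I) '' V) = V := by
    ext p
    constructor
    · rintro ⟨p', hp', hpq⟩
      rcases Quotient.exact hpq with ⟨h1, h2⟩ | rfl
      · exact hsat p' hp' h1 p h2
      · exact hp'
    · exact fun hp => ⟨p, hp, rfl⟩
  rwa [h]

/-- From an open set of the base topology containing `(t0, i)` one gets a radius `ε`. -/
lemma exists_eps {W : Set (Set.Icc (0:ℝ) 1 × I)} (hW : IsOpen[hedgehogBaseTop I] W)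
    {t0 : Set.Icc (0:ℝ) 1} {i : I} (h : (t0, i) ∈ W) :
    ∃ ε > 0, ∀ u : Set.Icc (0:ℝ) 1, |(u : ℝ) - (t0 : ℝ)| < ε → (u, i) ∈ W := by
  letI : TopologicalSpace I := ⊥
  have hW' : IsOpen W := hW
  have hcont : Continuous (fun u : Set.Icc (0:ℝ) 1 => (u, i)) :=
    continuous_id.prodMk continuous_const
  have hopen : IsOpen ((fun u : Set.Icc (0:ℝ) 1 => (u, i)) ⁻¹' W) := hW'.preimage hcont
  rcases Metric.isOpen_iff.mp hopen t0 h with ⟨ε, hε, hball⟩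
  refine ⟨ε, hε, fun u hu => hball ?_⟩
  rwa [Metric.mem_ball, Subtype.dist_eq, Real.dist_eq]

end QHAux

/-- The quotient hedgehog `J(κ)` is first countable iff `κ < ℵ₀`. -/
theorem quotHedgehog_firstCountable_iff (I : Type u) :
    @FirstCountableTopology (Hedgehog I) (quotHedgehogTop I) ↔
      #I < Cardinal.aleph0 := by
  letI : TopologicalSpace (Hedgehog I) := quotHedgehogTop I
  set q : Set.Icc (0:ℝ) 1 × I → Hedgehog I := Quotient.mk (hedgehogSetoid I) with hq
  have h0 : ((0:ℝ) ∈ Set.Icc (0:ℝ) 1) := by norm_num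
  constructor
  · -- first countable → κ < ℵ₀
    intro hFC
    by_contra hge
    push_neg at hge
    haveI : Infinite I := Cardinal.infinite_iff.mpr hge
    let e : ℕ ↪ I := Infinite.natEmbedding I
    set z0 : Hedgehog I := q (⟨0, h0⟩, e 0) with hz0
    haveI : (nhds z0).IsCountablyGenerated := hFC.nhds_generated_countable z0
    obtain ⟨s, hs⟩ := (nhds z0).exists_antitone_basis
    -- for each n, find a point on spine `e n` close to 0 inside `s n`
    have key : ∀ n : ℕ, ∃ u : Set.Icc (0:ℝ) 1, 0 < (u : ℝ) ∧ q (u, e n) ∈ s n := by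
      intro n
      have hsn : s n ∈ nhds z0 := hs.1.mem_of_mem trivial
      rcases mem_nhds_iff.mp hsn with ⟨W, hWs, hWo, hzW⟩
      have hWpre : IsOpen[hedgehogBaseTop I] (q ⁻¹' W) := isOpen_coinduced.mp hWo
      have hmem : (⟨0, h0⟩, e n) ∈ q ⁻¹' W := by
        have heq : q (⟨0, h0⟩, e n) = z0 := by
          rw [hz0]
          exact Quotient.sound (Or.inl ⟨rfl, rfl⟩)
        show q (⟨0, h0⟩, e n) ∈ W
        rw [heq]; exact hzW
      rcases QHAux.exists_eps hWpre hmem with ⟨ε, hε, hball⟩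
      have h12 : (0:ℝ) < min (ε/2) (1/2) := by positivity
      have hle1 : min (ε/2) (1/2) ≤ 1 := le_trans (min_le_right _ _) (by norm_num)
      refine ⟨⟨min (ε/2) (1/2), ⟨le_of_lt h12, hle1⟩⟩, h12, ?_⟩
      apply hWs
      apply hball
      have : |min (ε/2) (1/2) - (0:ℝ)| = min (ε/2) (1/2) := by
        rw [sub_zero, abs_of_pos h12]
      rw [this]
      exact lt_of_le_of_lt (min_le_left _ _) (by linarith)
    choose u hu hus using key
    -- build the open saturated set missing every point `(u n, e n)`
    classical
    set c : I → ℝ := fun i => if h : ∃ n, e n = i then (u h.choose : ℝ) else 2 with hc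
    have hcpos : ∀ i, 0 < c i := by
      intro i
      rw [hc]
      by_cases h : ∃ n, e n = i
      · simp only [dif_pos h]; exact hu _
      · simp only [dif_neg h]; norm_num
    have hcen : ∀ n, c (e n) = u n := by
      intro n
      have h : ∃ m, e m = e n := ⟨n, rfl⟩
      have hm : h.choose = n := e.injective h.choose_spec
      rw [hc]
      simp only [dif_pos h, hm]
    set V : Set (Set.Icc (0:ℝ) 1 × I) := {p | (p.1 : ℝ) < c p.2} with hV
    have hVopen : IsOpen[hedgehogBaseTop I] V := QHAux.isOpen_slices c
    have hVsat : ∀ p ∈ V, (p.1 : ℝ) = 0 → ∀ p' : Set.Icc (0:ℝ) 1 × I,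
        (p'.1 : ℝ) = 0 → p' ∈ V := by
      intro p _ _ p' hp'
      show (p'.1 : ℝ) < c p'.2
      rw [hp']
      exact hcpos _
    have hUopen : IsOpen (q '' V) := QHAux.isOpen_image_of_saturated V hVopen hVsat
    have hzU : z0 ∈ q '' V := ⟨(⟨0, h0⟩, e 0), by simpa [hV] using hcpos (e 0), rfl⟩
    have hU : q '' V ∈ nhds z0 := hUopen.mem_nhds hzU
    rcases hs.1.mem_iff.mp hU with ⟨n, -, hsub⟩
    have hin : q (u n, e n) ∈ q '' V := hsub (hus n)
    rcases hin with ⟨p', hp', heq⟩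
    rcases Quotient.exact heq with ⟨-, h2⟩ | rfl
    · exact absurd h2 (ne_of_gt (hu n))
    · have : (u n : ℝ) < c (e n) := hp'
      rw [hcen n] at this
      exact lt_irrefl _ this
  · -- κ < ℵ₀ → first countable
    intro hlt
    haveI : Finite I := Cardinal.mk_lt_aleph0_iff.mp hlt
    haveI := Fintype.ofFinite I
    refine ⟨fun x => ?_⟩
    induction x using Quotient.ind with
    | _ p =>
      obtain ⟨t, i⟩ := p
      rcases eq_or_lt_of_le t.2.1 with ht0 | ht0
      · -- the hedgehog point 0
        set U : ℕ → Set (Hedgehog I) :=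
          fun n => q '' {p : Set.Icc (0:ℝ) 1 × I | (p.1 : ℝ) < 1/(n+1)} with hUdef
        have hb : (nhds (q (t, i))).HasBasis (fun _ : ℕ => True) U := by
          constructor
          intro s
          constructor
          · intro hsn
            rcases mem_nhds_iff.mp hsn with ⟨W, hWs, hWo, hzW⟩
            have hWpre : IsOpen[hedgehogBaseTop I] (q ⁻¹' W) := isOpen_coinduced.mp hWo
            have hall : ∀ j : I, (⟨0, h0⟩, j) ∈ q ⁻¹' W := by
              intro j
              show q (⟨0, h0⟩, j) ∈ W
              have heq : q (⟨0, h0⟩, j) = q (t, i) :=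
                Quotient.sound (Or.inl ⟨rfl, ht0.symm⟩)
              rw [heq]; exact hzW
            have hεe : ∀ j : I, ∃ ε > 0, ∀ u : Set.Icc (0:ℝ) 1,
                (u : ℝ) < ε → (u, j) ∈ q ⁻¹' W := by
              intro j
              rcases QHAux.exists_eps hWpre (hall j) with ⟨ε, hε, hball⟩
              refine ⟨ε, hε, fun u hu => hball u ?_⟩
              have hcoe : ((⟨0, h0⟩ : Set.Icc (0:ℝ) 1) : ℝ) = 0 := rfl
              rw [hcoe, sub_zero, abs_of_nonneg u.2.1]
              exact hu
            choose ε hεpos hεball using hεe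
            have hne : (Finset.univ : Finset I).Nonempty := ⟨i, Finset.mem_univ i⟩
            set δ := Finset.univ.inf' hne ε with hδdef
            have hδ : 0 < δ := (Finset.lt_inf'_iff hne).mpr fun j _ => hεpos j
            obtain ⟨n, hn⟩ := exists_nat_one_div_lt hδ
            refine ⟨n, trivial, ?_⟩
            rintro x ⟨pp, hpp, rfl⟩
            apply hWs
            have h1 : (pp.1 : ℝ) < ε pp.2 := by
              have h2 : δ ≤ ε pp.2 := Finset.inf'_le _ (Finset.mem_univ pp.2)
              calc (pp.1 : ℝ) < 1/(n+1) := hpp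
                _ < δ := hn
                _ ≤ ε pp.2 := h2
            exact hεball pp.2 pp.1 h1
          · rintro ⟨n, -, hsub⟩
            have hUopen : IsOpen (U n) :=
              QHAux.isOpen_image_of_saturated _ (QHAux.isOpen_slices (fun _ => 1/(n+1)))
                (by
                  intro pp _ _ p' hp'
                  show (p'.1 : ℝ) < 1/(n+1)
                  rw [hp']
                  positivity)
            have hzU : q (t, i) ∈ U n := by
              refine ⟨(t, i), ?_, rfl⟩
              show (t : ℝ) < 1/(n+1)
              rw [← ht0]
              positivity
            exact Filter.mem_of_superset (hUopen.mem_nhds hzU) hsub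
        exact hb.isCountablyGenerated
      · -- a point on a spine with t > 0
        set V : ℕ → Set (Set.Icc (0:ℝ) 1 × I) :=
          fun n => {p | p.2 = i ∧ |(p.1 : ℝ) - (t : ℝ)| < min (t : ℝ) (1/(n+1))} with hVdef
        set U : ℕ → Set (Hedgehog I) := fun n => q '' V n with hUdef
        have hVsat : ∀ n, ∀ pp ∈ V n, (pp.1 : ℝ) = 0 →
            ∀ p' : Set.Icc (0:ℝ) 1 × I, (p'.1 : ℝ) = 0 → p' ∈ V n := by
          intro n pp hpp hpp0 p' _
          exfalso
          have h2 : |(pp.1 : ℝ) - (t : ℝ)| < min (t : ℝ) (1/(n+1)) := hpp.2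
          rw [hpp0, zero_sub, abs_neg, abs_of_pos ht0] at h2
          exact absurd (lt_of_lt_of_le h2 (min_le_left _ _)) (lt_irrefl _)
        have hb : (nhds (q (t, i))).HasBasis (fun _ : ℕ => True) U := by
          constructor
          intro s
          constructor
          · intro hsn
            rcases mem_nhds_iff.mp hsn with ⟨W, hWs, hWo, hzW⟩
            have hWpre : IsOpen[hedgehogBaseTop I] (q ⁻¹' W) := isOpen_coinduced.mp hWo
            have hmem : (t, i) ∈ q ⁻¹' W := hzW
            rcases QHAux.exists_eps hWpre hmem with ⟨ε, hε, hball⟩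
            obtain ⟨n, hn⟩ := exists_nat_one_div_lt hε
            refine ⟨n, trivial, ?_⟩
            rintro x ⟨pp, ⟨hpi, hpd⟩, rfl⟩
            apply hWs
            have h1 : |(pp.1 : ℝ) - (t : ℝ)| < ε :=
              lt_trans (lt_of_lt_of_le hpd (min_le_right _ _)) hn
            have h2 := hball pp.1 h1
            rwa [show (pp.1, i) = pp from by rw [← hpi]] at h2
          · rintro ⟨n, -, hsub⟩
            have hUopen : IsOpen (U n) :=
              QHAux.isOpen_image_of_saturated _
                (QHAux.isOpen_spine i (t : ℝ) (min (t : ℝ) (1/(n+1)))) (hVsat n)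
            have hzU : q (t, i) ∈ U n := by
              refine ⟨(t, i), ⟨rfl, ?_⟩, rfl⟩
              rw [sub_self, abs_zero]
              exact lt_min ht0 (by positivity)
            exact Filter.mem_of_superset (hUopen.mem_nhds hzU) hsub
        exact hb.isCountablyGenerated
end
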